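/- arXiv:2003.03420 — 5 statements merged into one kernel-verified Lean document; each statement's English description precedes it below -/
import Mathlib

section
/- The set {α ∈ ℝ : there exists z ∈ ℂ with |z| = 1 and p(z) + α·q(z) = 0} is finite. -/
open Polynomial

theorem stmt3 (p q : ℝ[X]) (hp : p.Monic)
    (hroots : ∀ z : ℂ, (p.map (algebraMap ℝ ℂ)).IsRoot z → ‖z‖ < 1)
    (hdeg : q.degree < p.degree) :
    {α : ℝ | ∃ z : ℂ, ‖z‖ = 1 ∧
      Polynomial.aeval z p + (α : ℂ) * Polynomial.aeval z q = 0}.Finite := by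
  set P : ℂ[X] := p.map (algebraMap ℝ ℂ) with hPdef
  set Q : ℂ[X] := q.map (algebraMap ℝ ℂ) with hQdef
  set n : ℕ := p.natDegree with hn
  have haeval : ∀ (f : ℝ[X]) (z : ℂ), (f.map (algebraMap ℝ ℂ)).eval z = aeval z f := by
    intro f z; rw [aeval_def, eval_map]
  have hPmonic : P.Monic := hp.map _
  have hPne : P ≠ 0 := hPmonic.ne_zero
  have hPdeg : P.natDegree = n := by simp [hPdef, hn]
  have hqdeg : q.natDegree ≤ n := by
    rcases eq_or_ne q 0 with rfl | hq
    · simp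
    · exact natDegree_le_natDegree hdeg.le
  have hQdeg : Q.natDegree ≤ n := by
    simpa [hQdef] using hqdeg
  have hPz : ∀ z : ℂ, 1 ≤ ‖z‖ → P.eval z ≠ 0 := by
    intro z hz h
    have := hroots z h
    linarith
  -- evaluation of reflections
  have hrefl : ∀ (F : ℂ[X]), F.natDegree ≤ n → ∀ w : ℂ, w ≠ 0 →
      (reflect n F).eval w = w ^ n * F.eval w⁻¹ := by
    intro F hF w hw
    have hwi : w⁻¹ ≠ 0 := inv_ne_zero hw
    letI : Invertible (w⁻¹ : ℂ) := invertibleOfNonzero hwi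
    have := eval₂_reflect_mul_pow (RingHom.id ℂ) (w⁻¹) n F hF
    have hinv : (⅟ (w⁻¹ : ℂ)) = w := by
      rw [invOf_eq_inv, inv_inv]
    rw [hinv] at this
    have h2 : eval₂ (RingHom.id ℂ) w (reflect n F) = (reflect n F).eval w := rfl
    have h3 : eval₂ (RingHom.id ℂ) w⁻¹ F = F.eval w⁻¹ := rfl
    rw [h2, h3] at this
    rw [← this, inv_pow, mul_comm (w ^ n), mul_assoc, inv_mul_cancel₀ (pow_ne_zero n hw), mul_one]
  have hreflP : ∀ w : ℂ, ‖w‖ ≤ 1 → (reflect n P).eval w ≠ 0 := by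
    intro w hw
    rcases eq_or_ne w 0 with rfl | hw0
    · rw [← coeff_zero_eq_eval_zero, coeff_reflect, revAt_le (Nat.zero_le n), Nat.sub_zero,
        ← hPdeg, hPmonic.coeff_natDegree]
      exact one_ne_zero
    · rw [hrefl P hPdeg.le w hw0]
      refine mul_ne_zero (pow_ne_zero _ hw0) (hPz _ ?_)
      rw [norm_inv]
      have h0 : 0 < ‖w‖ := norm_pos_iff.mpr hw0
      rw [le_inv_comm₀ one_pos h0]
      simpa using hw
  rcases eq_or_ne q 0 with rfl | hq
  · convert Set.finite_empty
    ext α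
    simp only [Set.mem_setOf_eq, map_zero, mul_zero, add_zero, Set.mem_empty_iff_false,
      iff_false, not_exists, not_and]
    intro z hz hroot
    exact hPz z hz.ge (by rw [haeval]; exact hroot)
  have hQne : Q ≠ 0 := by
    simpa [hQdef, Polynomial.map_eq_zero] using hq
  set R : ℂ[X] := P * reflect n Q - reflect n P * Q with hRdef
  have hRne : R ≠ 0 := by
    intro h0
    have heq : P * reflect n Q = reflect n P * Q := by
      have := sub_eq_zero.mp h0
      linear_combination this
    have hcop : IsCoprime P (reflect n P) := by
      rw [Polynomial.isCoprime_iff_aeval_ne_zero_of_isAlgClosed (k := ℂ) ℂ]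
      intro a
      rcases le_or_gt 1 ‖a‖ with h | h
      · left; simpa [coe_aeval_eq_eval] using hPz a h
      · right; simpa [coe_aeval_eq_eval] using hreflP a h.le
    have hdvd : P ∣ Q := hcop.dvd_of_dvd_mul_left ⟨reflect n Q, heq.symm⟩
    have := degree_le_of_dvd hdvd hQne
    rw [hPdef, hQdef, degree_map, degree_map] at this
    exact absurd this (not_le.mpr hdeg)
  have hfin : {z : ℂ | R.IsRoot z}.Finite := finite_setOf_isRoot hRne
  apply Set.Finite.subset (hfin.image fun z => (-(P.eval z / Q.eval z)).re)
  rintro α ⟨z, hz1, hz2⟩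
  have hz0 : z ≠ 0 := by
    intro h; rw [h] at hz1; simp at hz1
  rw [← haeval, ← haeval] at hz2
  have hQz : Q.eval z ≠ 0 := by
    intro h
    apply hPz z hz1.ge
    rw [h, mul_zero, add_zero] at hz2
    exact hz2
  have hPzval : P.eval z = -(α : ℂ) * Q.eval z := by linear_combination hz2
  have hzc : z⁻¹ = (starRingEnd ℂ) z := by
    have h1 : z * (starRingEnd ℂ) z = 1 := by
      rw [Complex.mul_conj, Complex.normSq_eq_norm_sq, hz1]; norm_num
    exact inv_eq_of_mul_eq_one_right h1
  have hconj : ∀ f : ℝ[X], (f.map (algebraMap ℝ ℂ)).eval z⁻¹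
      = (starRingEnd ℂ) ((f.map (algebraMap ℝ ℂ)).eval z) := by
    intro f
    rw [hzc, haeval, haeval, Polynomial.aeval_conj]
  refine ⟨z, ?_, ?_⟩
  · show R.eval z = 0
    rw [hRdef, eval_sub, eval_mul, eval_mul, hrefl P hPdeg.le z hz0,
      hrefl Q hQdeg z hz0, hconj p, hconj q]
    rw [hPzval]
    simp only [map_mul, map_neg, Complex.conj_ofReal]
    ring
  · show (-(P.eval z / Q.eval z)).re = α
    rw [hPzval]
    field_simp
    exact Complex.ofReal_re α
end

section
/- The function α ↦ spr(p + α·q) tends to +∞ as α → +∞ and also as α → −∞. -/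
open Polynomial

noncomputable def spr (r : ℂ[X]) : ℝ := sSup ((fun z : ℂ => ‖z‖) '' {z : ℂ | r.IsRoot z})

noncomputable def sprR (r : ℝ[X]) : ℝ := spr (r.map (algebraMap ℝ ℂ))

lemma key_bound (r : ℝ[X]) (hr : r.Monic) (i : ℕ) :
    |r.coeff i| ≤ max (sprR r) 1 ^ r.natDegree * (r.natDegree.choose (r.natDegree / 2)) := by
  have hmap : (r.map (algebraMap ℝ ℂ)) ≠ 0 := (hr.map _).ne_zero
  have hbdd : BddAbove ((fun z : ℂ => ‖z‖) '' {z : ℂ | (r.map (algebraMap ℝ ℂ)).IsRoot z}) :=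
    ((Polynomial.finite_setOf_isRoot hmap).image _).bddAbove
  have h4 : ∀ z ∈ (r.map (algebraMap ℝ ℂ)).roots, ‖z‖ ≤ sprR r := by
    intro z hz
    have : (r.map (algebraMap ℝ ℂ)).IsRoot z := (Polynomial.mem_roots hmap).1 hz
    exact le_csSup hbdd ⟨z, this, rfl⟩
  have h4' : ∀ z ∈ (r.map (algebraMap ℝ ℂ)).roots, ‖z‖ ≤ max (sprR r) 1 := fun z hz =>
    (h4 z hz).trans (le_max_left _ _)
  have := Polynomial.coeff_bdd_of_roots_le (algebraMap ℝ ℂ) hr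
    (IsAlgClosed.splits _) le_rfl h4' i
  rw [Polynomial.coeff_map] at this
  simpa [max_max_max_comm] using this

lemma main_aux (p q : ℝ[X]) (hp : p.Monic) (hq : q ≠ 0) (hdeg : q.degree < p.degree)
    (l : Filter ℝ) (hl : Filter.Tendsto (fun α : ℝ => |α|) l Filter.atTop) :
    Filter.Tendsto (fun α : ℝ => sprR (p + C α * q)) l Filter.atTop := by
  set n := p.natDegree with hn_def
  have hn : 0 < n := natDegree_pos_iff_degree_pos.2 (lt_of_le_of_lt (zero_le_degree_iff.2 hq) hdeg)
  set k := q.natDegree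
  have hk : q.coeff k ≠ 0 := leadingCoeff_ne_zero.2 hq
  have hdegC : ∀ α : ℝ, (C α * q).degree < p.degree := fun α =>
    by rw [← smul_eq_C_mul]; exact lt_of_le_of_lt (degree_smul_le α q) hdeg
  have hmonic : ∀ α : ℝ, (p + C α * q).Monic := fun α => hp.add_of_left (hdegC α)
  have hndeg : ∀ α : ℝ, (p + C α * q).natDegree = n := fun α =>
    natDegree_eq_of_degree_eq (degree_add_eq_left_of_degree_lt (hdegC α))
  have hcoeff : ∀ α : ℝ, (p + C α * q).coeff k = p.coeff k + α * q.coeff k := by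
    intro α; simp [coeff_add, coeff_C_mul]
  set c : ℝ := (n.choose (n / 2) : ℝ) with hc_def
  have hc : (0 : ℝ) < c := by
    have := Nat.choose_pos (Nat.div_le_self n 2)
    rw [hc_def]; exact_mod_cast this
  -- the linear coefficient blows up
  have hlin : Filter.Tendsto (fun α : ℝ => |p.coeff k + α * q.coeff k|) l Filter.atTop := by
    have h1 : Filter.Tendsto (fun α : ℝ => |α| * |q.coeff k| + -|p.coeff k|) l Filter.atTop :=
      Filter.tendsto_atTop_add_const_right l _ (hl.atTop_mul_const (abs_pos.2 hk))
    refine Filter.tendsto_atTop_mono (fun α => ?_) h1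
    have h2 := abs_add_le (p.coeff k + α * q.coeff k) (-(p.coeff k))
    have h3 : p.coeff k + α * q.coeff k + -(p.coeff k) = α * q.coeff k := by ring
    rw [h3, abs_neg, abs_mul] at h2
    linarith
  rw [Filter.tendsto_atTop]
  intro b
  set B : ℝ := max b 2 with hB_def
  have hB2 : (2 : ℝ) ≤ B := le_max_right _ _
  have ev : ∀ᶠ α in l, B ^ n * c + 1 ≤ |p.coeff k + α * q.coeff k| :=
    hlin.eventually (Filter.eventually_ge_atTop _)
  filter_upwards [ev] with α hα
  have hM := key_bound (p + C α * q) (hmonic α) k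
  rw [hndeg α, hcoeff α] at hM
  set M : ℝ := max (sprR (p + C α * q)) 1 with hM_def
  have hM1 : (1 : ℝ) ≤ M := le_max_right _ _
  have hpow : B ^ n < M ^ n := by
    have : B ^ n * c < M ^ n * c := by
      calc B ^ n * c < B ^ n * c + 1 := by linarith
        _ ≤ M ^ n * c := le_trans hα hM
    exact lt_of_mul_lt_mul_right this hc.le
  have hBM : B < M := lt_of_pow_lt_pow_left₀ n (le_trans zero_le_one hM1) hpow
  have hMspr : M = sprR (p + C α * q) := by
    rcases max_cases (sprR (p + C α * q)) 1 with ⟨h, _⟩ | ⟨h, _⟩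
    · exact h
    · exfalso; rw [hM_def, h] at hBM; linarith
  rw [← hMspr]
  calc b ≤ B := le_max_left _ _
    _ ≤ M := hBM.le

theorem stmt5 (p q : ℝ[X]) (hp : p.Monic)
    (hroots : ∀ z : ℂ, (p.map (algebraMap ℝ ℂ)).IsRoot z → ‖z‖ < 1)
    (hq : q ≠ 0) (hdeg : q.degree < p.degree) :
    Filter.Tendsto (fun α : ℝ => sprR (p + C α * q)) Filter.atTop Filter.atTop ∧
    Filter.Tendsto (fun α : ℝ => sprR (p + C α * q)) Filter.atBot Filter.atTop := by
  exact ⟨main_aux p q hp hq hdeg _ Filter.tendsto_abs_atTop_atTop,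
    main_aux p q hp hq hdeg _ Filter.tendsto_abs_atBot_atTop⟩
end

section
/- For every d ∈ ℕ there exist real numbers α_{d,0}, α_d, α_{d,1} > 0 with α_{d,0} < α_d < α_{d,1} such that spr(p_{d,α_d}) = 1, spr(p_{d,α}) < 1 for all α ∈ (α_{d,0}, α_d), and spr(p_{d,α}) > 1 for all α ∈ (α_d, α_{d,1}). -/
open Polynomial

noncomputable def pda (N D : ℝ[X]) (d : ℕ) (α : ℝ) : ℝ[X] :=
  X ^ (d + 1) * D - C α * ((X - 1) * N)

lemma pow_card_le_prod_real {δ : ℝ} (hδ : 0 ≤ δ) (s : Multiset ℝ) (h : ∀ x ∈ s, δ ≤ x) :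
    δ ^ Multiset.card s ≤ s.prod := by
  induction s using Multiset.induction with
  | empty => simp
  | cons a s ih =>
    have ha := h a (Multiset.mem_cons_self a s)
    have hs := ih (fun x hx => h x (Multiset.mem_cons_of_mem hx))
    simp only [Multiset.card_cons, Multiset.prod_cons, pow_succ']
    exact mul_le_mul ha hs (pow_nonneg hδ _) (hδ.trans ha)

lemma prod_le_pow_card_real {c : ℝ} (s : Multiset ℝ) (h : ∀ x ∈ s, 0 ≤ x ∧ x ≤ c) :
    s.prod ≤ c ^ Multiset.card s := by
  induction s using Multiset.induction with
  | empty => simp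
  | cons a s ih =>
    have ha := h a (Multiset.mem_cons_self a s)
    have hs := ih (fun x hx => h x (Multiset.mem_cons_of_mem hx))
    have h0 : (0:ℝ) ≤ s.prod := Multiset.prod_nonneg (fun x hx => (h x (Multiset.mem_cons_of_mem hx)).1)
    simp only [Multiset.card_cons, Multiset.prod_cons, pow_succ']
    exact mul_le_mul ha.2 hs h0 (ha.1.trans ha.2)

lemma norm_mprod (s : Multiset ℂ) : ‖s.prod‖ = (s.map fun x => ‖x‖).prod :=
  map_multiset_prod normHom s

lemma abs_eval_ge (p : ℂ[X]) (hp : p.Monic) {w : ℂ} {δ : ℝ} (hδ : 0 ≤ δ)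
    (h : ∀ z, p.IsRoot z → δ ≤ ‖w - z‖) :
    δ ^ p.natDegree ≤ ‖p.eval w‖ := by
  have hfact := (IsAlgClosed.splits p).eq_prod_roots_of_monic hp
  have hcard : Multiset.card p.roots = p.natDegree :=
by
    have := (IsAlgClosed.splits p).natDegree_eq_card_roots
    exact this.symm
  have hev : p.eval w = ((p.roots.map fun a => w - a)).prod := by
    conv_lhs => rw [hfact]
    rw [eval_multiset_prod, Multiset.map_map]
    simp
  rw [hev, norm_mprod]
  rw [Multiset.map_map]
  have := pow_card_le_prod_real hδ ((p.roots.map fun a => ‖w - a‖))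
    (by
      intro x hx
      obtain ⟨a, ha, rfl⟩ := Multiset.mem_map.mp hx
      exact h a ((mem_roots hp.ne_zero).mp ha))
  simpa [hcard] using this

lemma abs_eval_le (p : ℂ[X]) (hp : p.Monic) {t : ℂ} {c : ℝ} (hc : 0 ≤ c)
    (h : ∀ z, p.IsRoot z → ‖z‖ ≤ c) :
    ‖p.eval t‖ ≤ (‖t‖ + c) ^ p.natDegree := by
  have hfact := (IsAlgClosed.splits p).eq_prod_roots_of_monic hp
  have hcard : Multiset.card p.roots = p.natDegree :=
by
    have := (IsAlgClosed.splits p).natDegree_eq_card_roots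
    exact this.symm
  have hev : p.eval t = ((p.roots.map fun a => t - a)).prod := by
    conv_lhs => rw [hfact]
    rw [eval_multiset_prod, Multiset.map_map]
    simp
  rw [hev, norm_mprod, Multiset.map_map]
  rw [← hcard, ← Multiset.card_map ((fun x : ℂ => ‖x‖) ∘ fun a => t - a) p.roots]
  apply prod_le_pow_card_real
  intro x hx
  obtain ⟨a, ha, rfl⟩ := Multiset.mem_map.mp hx
  refine ⟨norm_nonneg _, ?_⟩
  calc ‖t - a‖ ≤ ‖t‖ + ‖a‖ := by
        simpa [sub_eq_add_neg] using norm_add_le t (-a)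
    _ ≤ ‖t‖ + c := by linarith [h a ((mem_roots hp.ne_zero).mp ha)]

lemma cauchy_bound (p : ℂ[X]) (hp : p.Monic) (hd : 0 < p.natDegree) {z : ℂ} (hz : p.IsRoot z) :
    ‖z‖ ≤ max 1 (∑ i ∈ Finset.range p.natDegree, ‖p.coeff i‖) := by
  set e := p.natDegree with he
  by_cases h1 : ‖z‖ ≤ 1
  · exact h1.trans (le_max_left _ _)
  push_neg at h1
  refine le_trans ?_ (le_max_right _ _)
  have hev : p.eval z = 0 := hz
  rw [eval_eq_sum_range, Finset.sum_range_succ] at hev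
  have hlead : p.coeff e = 1 := hp.coeff_natDegree
  have hze : z ^ e = -∑ i ∈ Finset.range e, p.coeff i * z ^ i := by
    rw [hlead] at hev; linear_combination hev
  have habs : ‖z‖ ^ e ≤
      (∑ i ∈ Finset.range e, ‖p.coeff i‖) * ‖z‖ ^ (e - 1) := by
    calc ‖z‖ ^ e = ‖z ^ e‖ := by rw [norm_pow]
      _ = ‖∑ i ∈ Finset.range e, p.coeff i * z ^ i‖ := by rw [hze, norm_neg]
      _ ≤ ∑ i ∈ Finset.range e, ‖p.coeff i * z ^ i‖ :=
          norm_sum_le _ _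
      _ ≤ ∑ i ∈ Finset.range e, ‖p.coeff i‖ * ‖z‖ ^ (e - 1) := by
          apply Finset.sum_le_sum
          intro i hi
          rw [norm_mul, norm_pow]
          apply mul_le_mul_of_nonneg_left _ (norm_nonneg _)
          apply pow_le_pow_right₀ (le_of_lt h1)
          have := Finset.mem_range.mp hi
          omega
      _ = _ := by rw [← Finset.sum_mul]
  have hpow : ‖z‖ ^ e = ‖z‖ * ‖z‖ ^ (e - 1) := by
    rw [← pow_succ']
    congr 1
    omega
  rw [hpow] at habs
  have hzpos : (0:ℝ) < ‖z‖ ^ (e - 1) := pow_pos (by linarith) _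
  exact le_of_mul_le_mul_right (by linarith) hzpos

lemma reflect_eval (p : ℂ[X]) {M : ℕ} (hM : p.natDegree ≤ M) {z : ℂ} (hz : z ≠ 0) :
    (p.reflect M).eval z = z ^ M * p.eval z⁻¹ := by
  have hz' : z⁻¹ ≠ 0 := inv_ne_zero hz
  letI := invertibleOfNonzero hz'
  have := eval₂_reflect_mul_pow (RingHom.id ℂ) z⁻¹ M p hM
  rw [invOf_eq_inv, inv_inv, eval₂_eq_eval_map, eval₂_eq_eval_map, Polynomial.map_id, Polynomial.map_id] at this
  have hzM : z ^ M ≠ 0 := pow_ne_zero _ hz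
  rw [← this, mul_left_comm, ← mul_pow, mul_inv_cancel₀ hz, one_pow, mul_one]

lemma spr_attained (p : ℂ[X]) (h0 : 0 < p.degree) :
    ∃ z, p.IsRoot z ∧ ‖z‖ = spr p ∧ ∀ w, p.IsRoot w → ‖w‖ ≤ spr p := by
  have hp0 : p ≠ 0 := fun h => by simp [h] at h0
  have hfin : ((fun z : ℂ => ‖z‖) '' {z : ℂ | p.IsRoot z}).Finite :=
    (finite_setOf_isRoot hp0).image _
  have hne : ((fun z : ℂ => ‖z‖) '' {z : ℂ | p.IsRoot z}).Nonempty := by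
    obtain ⟨z, hz⟩ := Complex.exists_root h0
    exact ⟨‖z‖, z, hz, rfl⟩
  obtain ⟨z, hz, hzeq⟩ := hne.csSup_mem hfin
  exact ⟨z, hz, hzeq, fun w hw => le_csSup hfin.bddAbove ⟨w, hw, rfl⟩⟩

set_option maxHeartbeats 2000000 in
theorem stmt6 (N D : ℝ[X]) (hco : IsCoprime N D) (hD : D.Monic)
    (hdeg : N.degree < D.degree)
    (hDroots : ∀ z : ℂ, Polynomial.aeval z D = 0 → ‖z‖ < 1)
    (hN : N ≠ 0)
    (hNcirc : ∀ z : ℂ, ‖z‖ = 1 → Polynomial.aeval z N ≠ 0) :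
    ∀ d : ℕ, ∃ α₀ αd α₁ : ℝ, 0 < α₀ ∧ α₀ < αd ∧ αd < α₁ ∧
      sprR (pda N D d αd) = 1 ∧
      (∀ α ∈ Set.Ioo α₀ αd, sprR (pda N D d α) < 1) ∧
      (∀ α ∈ Set.Ioo αd α₁, sprR (pda N D d α) > 1) := by
  intro d
  have hD0 : D ≠ 0 := hD.ne_zero
  set φ := algebraMap ℝ ℂ with hφ
  set m := D.natDegree with hm
  set n := N.natDegree with hn
  have hnm : n < m := natDegree_lt_natDegree hN hdeg
  set A : ℝ[X] := X ^ (d + 1) * D with hA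
  set B : ℝ[X] := (X - 1) * N with hB
  set e := d + 1 + m with he
  set Ac := A.map φ with hAc
  set Bc := B.map φ with hBc
  set P : ℝ → ℂ[X] := fun α => (pda N D d α).map φ with hP
  set f : ℝ → ℝ := fun α => sprR (pda N D d α) with hf
  -- basic degree facts
  have hAmon : A.Monic := (monic_X_pow (d + 1)).mul hD
  have hAdeg : A.natDegree = e := by
    rw [hA, natDegree_mul (pow_ne_zero _ X_ne_zero) hD0, natDegree_X_pow, he, hm]
  have hXsub : (X - 1 : ℝ[X]) = X - C 1 := by norm_num
  have hBdeg : B.natDegree ≤ n + 1 := by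
    refine natDegree_mul_le.trans ?_
    rw [hXsub, natDegree_X_sub_C]
    omega
  have hBAlt : ∀ α : ℝ, (C α * B).natDegree < A.natDegree := by
    intro α
    have := natDegree_mul_le (p := C α) (q := B)
    simp only [natDegree_C, zero_add] at this
    omega
  have hPmon : ∀ α : ℝ, (pda N D d α).Monic := by
    intro α
    refine hAmon.sub_of_left ?_
    calc (C α * B).degree ≤ ((C α * B).natDegree : WithBot ℕ) := degree_le_natDegree
      _ < (A.natDegree : WithBot ℕ) := by exact_mod_cast Nat.cast_lt.mpr (hBAlt α)
      _ = A.degree := (degree_eq_natDegree hAmon.ne_zero).symm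
  have hPdeg : ∀ α : ℝ, (pda N D d α).natDegree = e := by
    intro α
    rw [pda, ← hA, ← hB, natDegree_sub_eq_left_of_natDegree_lt (hBAlt α), hAdeg]
  have hPcmon : ∀ α : ℝ, (P α).Monic := fun α => (hPmon α).map φ
  have hPcdeg : ∀ α : ℝ, (P α).natDegree = e := by
    intro α
    rw [hP]
    simp only
    rw [(hPmon α).natDegree_map, hPdeg]
  have hePos : 0 < e := by omega
  -- eval formulas
  have hPev : ∀ (α : ℝ) (z : ℂ), (P α).eval z = Ac.eval z - (α : ℂ) * Bc.eval z := by
    intro α z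
    rw [hP]
    simp only [pda, ← hA, ← hB, Polynomial.map_sub, Polynomial.map_mul, map_C, eval_sub,
      eval_mul, eval_C, hAc, hBc]
    norm_num [hφ, Complex.coe_algebraMap]
  have hfP : ∀ α : ℝ, f α = spr (P α) := fun _ => rfl
  -- conversion between aeval and eval over map
  have haev : ∀ (p : ℝ[X]) (z : ℂ), (Polynomial.aeval z) p = (p.map φ).eval z := by
    intro p z
    rw [aeval_def, eval₂_eq_eval_map, hφ]
  -- attained max root
  have hmax : ∀ α : ℝ, ∃ z : ℂ, (P α).IsRoot z ∧ ‖z‖ = f α ∧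
      ∀ w, (P α).IsRoot w → ‖w‖ ≤ f α := by
    intro α
    have hdegpos : 0 < (P α).degree := by
      rw [degree_eq_natDegree (hPcmon α).ne_zero, hPcdeg]
      exact_mod_cast hePos
    exact (hfP α) ▸ spr_attained (P α) hdegpos
  have hf0 : ∀ α : ℝ, 0 ≤ f α := by
    intro α
    obtain ⟨z, _, hz2, _⟩ := hmax α
    rw [← hz2]
    exact norm_nonneg z
  -- lower semicontinuity
  have hL : ∀ (α δ : ℝ), 0 < δ → ∃ ε > 0, ∀ α' : ℝ, |α' - α| < ε → f α - δ < f α' := by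
    intro α δ hδ
    obtain ⟨z, hz, hzabs, _⟩ := hmax α
    set M := ‖Bc.eval z‖ with hM
    have hM0 : 0 ≤ M := norm_nonneg _
    refine ⟨δ ^ e / (M + 1), by positivity, ?_⟩
    intro α' hα'
    by_contra hcon
    push_neg at hcon
    -- all roots of P α' are ≤ f α' ≤ f α - δ, and |z| = f α, so each |z - r| ≥ δ
    have hroots : ∀ r, (P α').IsRoot r → δ ≤ ‖z - r‖ := by
      intro r hr
      obtain ⟨_, _, _, hub⟩ := hmax α'
      have h1 : ‖r‖ ≤ f α - δ := le_trans (hub r hr) hcon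
      calc δ = f α - (f α - δ) := by ring
        _ ≤ ‖z‖ - ‖r‖ := by rw [hzabs]; linarith
        _ ≤ ‖z - r‖ := by
            have h4 := abs_norm_sub_norm_le z r
            have h5 := le_abs_self (‖z‖ - ‖r‖)
            linarith
    have hge := abs_eval_ge (P α') (hPcmon α') hδ.le hroots
    rw [hPcdeg] at hge
    have hzero : (P α).eval z = 0 := hz
    rw [hPev α z] at hzero
    have heval : (P α').eval z = ((α : ℂ) - (α' : ℂ)) * Bc.eval z := by
      rw [hPev α' z]
      linear_combination hzero
    rw [heval] at hge
    rw [norm_mul] at hge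
    have habs : ‖(α : ℂ) - (α' : ℂ)‖ = |α - α'| := by
      rw [← Complex.ofReal_sub, Complex.norm_real, Real.norm_eq_abs]
    rw [habs] at hge
    have h2 : |α - α'| * M < δ ^ e := by
      have h3 : |α - α'| < δ ^ e / (M + 1) := by rw [abs_sub_comm]; exact hα'
      calc |α - α'| * M ≤ |α - α'| * (M + 1) := by nlinarith [abs_nonneg (α - α')]
        _ < (δ ^ e / (M + 1)) * (M + 1) := by
            apply mul_lt_mul_of_pos_right h3
            linarith
        _ = δ ^ e := by field_simp
    linarith
  -- upper semicontinuity
  have hU : ∀ (α δ : ℝ), 0 < δ → ∃ ε > 0, ∀ α' : ℝ, |α' - α| < ε → f α' < f α + δ := by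
    intro α δ hδ
    set R : ℝ := max 1 (∑ i ∈ Finset.range e, (|A.coeff i| + (|α| + 1) * |B.coeff i|)) with hR
    have hR1 : (1 : ℝ) ≤ R := le_max_left _ _
    -- uniform root bound for |α' - α| ≤ 1
    have hUb : ∀ α' : ℝ, |α' - α| ≤ 1 → ∀ z : ℂ, (P α').IsRoot z → ‖z‖ ≤ R := by
      intro α' hα' z hz
      have hcb := cauchy_bound (P α') (hPcmon α') (by rw [hPcdeg]; exact hePos) hz
      rw [hPcdeg] at hcb
      refine hcb.trans (max_le_max le_rfl ?_)
      apply Finset.sum_le_sum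
      intro i _
      have hcoeff : (P α').coeff i = ((A.coeff i - α' * B.coeff i : ℝ) : ℂ) := by
        rw [hP]
        simp only [coeff_map, pda, ← hA, ← hB, coeff_sub, coeff_C_mul]
        norm_num [hφ, Complex.coe_algebraMap]
      rw [hcoeff, Complex.norm_real, Real.norm_eq_abs]
      have hα'le : |α'| ≤ |α| + 1 := by
        have := abs_sub_abs_le_abs_sub α' α
        linarith
      calc |A.coeff i - α' * B.coeff i| ≤ |A.coeff i| + |α'| * |B.coeff i| := by
            refine (abs_sub _ _).trans ?_
            rw [abs_mul]
        _ ≤ |A.coeff i| + (|α| + 1) * |B.coeff i| := by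
            have := abs_nonneg (B.coeff i)
            nlinarith
    -- bound on |Bc.eval w| for |w| ≤ R
    set MB : ℝ := ∑ i ∈ Finset.range (n + 2), |B.coeff i| * R ^ i with hMB
    have hMB0 : 0 ≤ MB := by
      apply Finset.sum_nonneg
      intro i _
      positivity
    have hBbd : ∀ w : ℂ, ‖w‖ ≤ R → ‖Bc.eval w‖ ≤ MB := by
      intro w hw
      have hdlt : Bc.natDegree < n + 2 := by
        have : Bc.natDegree ≤ B.natDegree := natDegree_map_le
        omega
      rw [eval_eq_sum_range' hdlt]
      refine (norm_sum_le _ _).trans ?_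
      apply Finset.sum_le_sum
      intro i _
      rw [norm_mul, norm_pow]
      have hBci : ‖Bc.coeff i‖ = |B.coeff i| := by
        rw [hBc, coeff_map]
        norm_num [hφ, Complex.coe_algebraMap, Complex.norm_real]
      rw [hBci]
      apply mul_le_mul_of_nonneg_left _ (abs_nonneg _)
      exact pow_le_pow_left₀ (norm_nonneg _) hw i
    refine ⟨min 1 (δ ^ e / (MB + 1)), by positivity, ?_⟩
    intro α' hα'
    by_contra hcon
    push_neg at hcon
    obtain ⟨w, hw, hwabs, _⟩ := hmax α'
    have hα'1 : |α' - α| ≤ 1 := le_of_lt (lt_of_lt_of_le hα' (min_le_left _ _))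
    have hwR : ‖w‖ ≤ R := hUb α' hα'1 w hw
    have hroots : ∀ r, (P α).IsRoot r → δ ≤ ‖w - r‖ := by
      intro r hr
      obtain ⟨_, _, _, hub⟩ := hmax α
      have h1 : ‖r‖ ≤ f α := hub r hr
      have h4 := abs_norm_sub_norm_le w r
      have h5 := le_abs_self (‖w‖ - ‖r‖)
      have : f α + δ ≤ ‖w‖ := by rw [hwabs]; exact hcon
      linarith
    have hge := abs_eval_ge (P α) (hPcmon α) hδ.le hroots
    rw [hPcdeg] at hge
    have hzero : (P α').eval w = 0 := hw
    rw [hPev α' w] at hzero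
    have heval : (P α).eval w = ((α' : ℂ) - (α : ℂ)) * Bc.eval w := by
      rw [hPev α w]
      linear_combination hzero
    rw [heval, norm_mul] at hge
    have habs : ‖(α' : ℂ) - (α : ℂ)‖ = |α' - α| := by
      rw [← Complex.ofReal_sub, Complex.norm_real, Real.norm_eq_abs]
    rw [habs] at hge
    have hBw := hBbd w hwR
    have h3 : |α' - α| < δ ^ e / (MB + 1) := lt_of_lt_of_le hα' (min_le_right _ _)
    have h2 : |α' - α| * ‖Bc.eval w‖ < δ ^ e := by
      calc |α' - α| * ‖Bc.eval w‖ ≤ |α' - α| * (MB + 1) := by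
            nlinarith [abs_nonneg (α' - α), norm_nonneg (Bc.eval w)]
        _ < (δ ^ e / (MB + 1)) * (MB + 1) := by
            apply mul_lt_mul_of_pos_right h3
            linarith
        _ = δ ^ e := by field_simp
    linarith
  -- continuity
  have hcont : Continuous f := by
    rw [Metric.continuous_iff]
    intro b γ hγ
    obtain ⟨ε1, hε1, hU1⟩ := hU b γ hγ
    obtain ⟨ε2, hε2, hL1⟩ := hL b γ hγ
    refine ⟨min ε1 ε2, lt_min hε1 hε2, ?_⟩
    intro a ha
    rw [Real.dist_eq] at ha ⊢
    have h1 := hU1 a (lt_of_lt_of_le ha (min_le_left _ _))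
    have h2 := hL1 a (lt_of_lt_of_le ha (min_le_right _ _))
    rw [abs_lt]
    constructor <;> linarith
  -- eval product forms
  have hAev : ∀ z : ℂ, Ac.eval z = z ^ (d + 1) * (D.map φ).eval z := by
    intro z
    rw [hAc, hA]
    simp [Polynomial.map_mul, Polynomial.map_pow]
  have hBev : ∀ z : ℂ, Bc.eval z = (z - 1) * (N.map φ).eval z := by
    intro z
    rw [hBc, hB]
    simp [Polynomial.map_mul, Polynomial.map_sub]
  have hDne : ∀ z : ℂ, 1 ≤ ‖z‖ → (D.map φ).eval z ≠ 0 := by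
    intro z hz hzero
    have := hDroots z (by rw [haev]; exact hzero)
    linarith
  have hNco : ∀ z : ℂ, (D.map φ).eval z = 0 → (N.map φ).eval z ≠ 0 := by
    intro z hDz hNz
    obtain ⟨u, v, huv⟩ := hco
    have h2 := congrArg (fun p : ℝ[X] => (p.map φ).eval z) huv
    simp only [Polynomial.map_add, Polynomial.map_mul, Polynomial.map_one, eval_add,
      eval_mul, eval_one] at h2
    rw [hDz, hNz] at h2
    simp at h2
  have hAcmon : Ac.Monic := hAmon.map φ
  have hAcdeg : Ac.natDegree = e := by rw [hAc, hAmon.natDegree_map, hAdeg]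
  have hBcdeg : Bc.natDegree ≤ n + 1 := le_trans natDegree_map_le hBdeg
  set Qc : ℂ[X] := X ^ (d + m - n) * Ac * (Bc.reflect (n + 1)) - (Ac.reflect e) * Bc
    with hQc
  have hQne : Qc ≠ 0 := by
    have hDdegpos : 0 < (D.map φ).degree := by
      rw [degree_map_eq_of_injective φ.injective, degree_eq_natDegree hD0, ← hm]
      exact_mod_cast (by omega : 0 < m)
    obtain ⟨z₀, hz₀⟩ := Complex.exists_root hDdegpos
    have hz₀abs : ‖z₀‖ < 1 := hDroots z₀ (by rw [haev]; exact hz₀)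
    have hz₀D : (D.map φ).eval z₀ = 0 := hz₀
    intro hQ0
    have hev : Qc.eval z₀ = 0 := by rw [hQ0]; simp
    rw [hQc] at hev
    simp only [eval_sub, eval_mul, eval_pow, eval_X] at hev
    rw [hAev z₀, hz₀D, mul_zero, mul_zero, zero_mul, zero_sub, neg_eq_zero] at hev
    have hBne : Bc.eval z₀ ≠ 0 := by
      rw [hBev]
      apply mul_ne_zero
      · intro h
        have : z₀ = 1 := by linear_combination h
        rw [this] at hz₀abs
        simp at hz₀abs
      · exact hNco z₀ hz₀D
    have hAref : (Ac.reflect e).eval z₀ ≠ 0 := by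
      by_cases hz₀0 : z₀ = 0
      · rw [hz₀0, ← coeff_zero_eq_eval_zero, coeff_reflect]
        rw [revAt_le (Nat.zero_le e), Nat.sub_zero, ← hAcdeg]
        rw [hAcmon.coeff_natDegree]
        exact one_ne_zero
      · rw [reflect_eval Ac (le_of_eq hAcdeg) hz₀0]
        apply mul_ne_zero (pow_ne_zero _ hz₀0)
        rw [hAev]
        apply mul_ne_zero (pow_ne_zero _ (inv_ne_zero hz₀0))
        apply hDne
        rw [norm_inv]
        have h1 : 0 < ‖z₀‖ := by
          simp [norm_pos_iff, hz₀0]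
        rw [le_inv_comm₀ one_pos h1]
        linarith
    exact absurd hev (mul_ne_zero hAref hBne)
  -- finiteness of the set of α with a root on the unit circle
  have hFin : {α : ℝ | f α = 1}.Finite := by
    apply Set.Finite.subset
      (Set.Finite.image (fun z => ((Ac.eval z) / (Bc.eval z)).re) (finite_setOf_isRoot hQne))
    intro α hα
    obtain ⟨z, hz, hzabs, _⟩ := hmax α
    rw [hα] at hzabs
    have hz0 : z ≠ 0 := by
      intro h
      rw [h] at hzabs
      simp at hzabs
    have hzero : (P α).eval z = 0 := hz
    rw [hPev] at hzero
    have hz1 : z ≠ 1 := by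
      intro h
      rw [h, hAev, hBev] at hzero
      exact hDne 1 (by simp) (by linear_combination hzero)
    have hBz : Bc.eval z ≠ 0 := by
      rw [hBev]
      apply mul_ne_zero (sub_ne_zero_of_ne hz1)
      intro h
      exact hNcirc z hzabs (by rw [haev]; exact h)
    have hAeq : Ac.eval z = (α : ℂ) * Bc.eval z := by linear_combination hzero
    -- conjugation: z⁻¹ = conj z
    have hnormsq : Complex.normSq z = 1 := by
      rw [← Complex.sq_norm, hzabs]
      norm_num
    have hconjz : (starRingEnd ℂ) z = z⁻¹ := by
      rw [Complex.inv_def, hnormsq]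
      simp
    have hconj : ∀ p : ℝ[X], (p.map φ).eval z⁻¹ = (starRingEnd ℂ) ((p.map φ).eval z) := by
      intro p
      rw [← hconjz, ← haev, ← haev]
      exact aeval_conj p z
    have hAinv : Ac.eval z⁻¹ = (α : ℂ) * Bc.eval z⁻¹ := by
      rw [hAc, hBc, hconj, hconj, ← hAc, ← hBc, hAeq]
      rw [map_mul, Complex.conj_ofReal]
    have hQroot : Qc.IsRoot z := by
      have h1 : (Bc.reflect (n + 1)).eval z = z ^ (n + 1) * Bc.eval z⁻¹ :=
        reflect_eval Bc hBcdeg hz0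
      have h2 : (Ac.reflect e).eval z = z ^ e * Ac.eval z⁻¹ :=
        reflect_eval Ac (le_of_eq hAcdeg) hz0
      have hexp : z ^ (d + m - n) * z ^ (n + 1) = z ^ e := by
        rw [← pow_add]
        congr 1
        omega
      show Qc.eval z = 0
      rw [hQc]
      simp only [eval_sub, eval_mul, eval_pow, eval_X]
      rw [h1, h2, hAeq, hAinv]
      linear_combination ((α : ℂ) * Bc.eval z * Bc.eval z⁻¹) * hexp
    refine ⟨z, hQroot, ?_⟩
    show (Ac.eval z / Bc.eval z).re = α
    rw [hAeq, mul_div_assoc, div_self hBz, mul_one, Complex.ofReal_re]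
  -- small α
  have hf0lt : f 0 < 1 := by
    obtain ⟨z, hz, hzabs, _⟩ := hmax 0
    rw [← hzabs]
    have hz0 : (P 0).eval z = 0 := hz
    rw [hPev, Complex.ofReal_zero, zero_mul, sub_zero, hAev] at hz0
    rcases mul_eq_zero.mp hz0 with h | h
    · have hz' : z = 0 := pow_eq_zero_iff (Nat.succ_ne_zero d) |>.mp h
      simp [hz']
    · exact hDroots z (by rw [haev]; exact h)
  have hsmall : ∃ ε₁ > 0, ∀ a : ℝ, |a| < ε₁ → f a < 1 := by
    obtain ⟨ε, hε, h⟩ := hU 0 (1 - f 0) (by linarith)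
    refine ⟨ε, hε, fun a ha => ?_⟩
    have := h a (by simpa using ha)
    linarith
  -- large α
  have hbig : ∃ K : ℝ, 0 < K ∧ 1 < f K := by
    have hinf : (Set.Ioi (1:ℝ) \ {x | N.IsRoot x}).Infinite :=
      (Set.Ioi_infinite 1).diff (finite_setOf_isRoot hN)
    obtain ⟨t, ht1, htN⟩ := hinf.nonempty
    rw [Set.mem_Ioi] at ht1
    have hBt : B.eval t ≠ 0 := by
      rw [hB, eval_mul, eval_sub, eval_X, eval_one]
      exact mul_ne_zero (sub_ne_zero_of_ne (by linarith : t ≠ 1)) htN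
    have hBt0 : 0 < |B.eval t| := abs_pos.mpr hBt
    have htpos : (0:ℝ) < t + 1 := by linarith
    set K := (|A.eval t| + (t + 1) ^ e + 1) / |B.eval t| with hK
    have hKpos : 0 < K := by positivity
    refine ⟨K, hKpos, ?_⟩
    by_contra hcon
    push_neg at hcon
    obtain ⟨_, _, _, hub⟩ := hmax K
    have hub' : ∀ w, (P K).IsRoot w → ‖w‖ ≤ 1 :=
      fun w hw => (hub w hw).trans hcon
    have hle := abs_eval_le (P K) (hPcmon K) zero_le_one (t := (t : ℂ)) hub'
    rw [hPcdeg, Complex.norm_real, Real.norm_eq_abs, abs_of_pos (by linarith : (0:ℝ) < t)] at hle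
    have hmapev : ∀ p : ℝ[X], (p.map φ).eval ((t : ℝ) : ℂ) = ((p.eval t : ℝ) : ℂ) := by
      intro p
      rw [eval_map, hφ]
      exact eval₂_at_apply (algebraMap ℝ ℂ) t
    have hevt : (P K).eval (t : ℂ) = ((A.eval t - K * B.eval t : ℝ) : ℂ) := by
      rw [hPev, hAc, hBc, hmapev, hmapev]
      push_cast
      ring
    rw [hevt, Complex.norm_real, Real.norm_eq_abs] at hle
    have htri : K * |B.eval t| - |A.eval t| ≤ |A.eval t - K * B.eval t| := by
      have h1 : |K * B.eval t| ≤ |A.eval t - K * B.eval t| + |A.eval t| := by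
        have := abs_sub_abs_le_abs_sub (K * B.eval t) (A.eval t)
        have h2 := abs_sub_comm (K * B.eval t) (A.eval t)
        linarith [le_abs_self (|K * B.eval t| - |A.eval t|)]
      rw [abs_mul, abs_of_pos hKpos] at h1
      linarith
    have hKB : K * |B.eval t| = |A.eval t| + (t + 1) ^ e + 1 := by
      rw [hK]
      field_simp
    rw [hKB] at htri
    linarith
  -- assembly
  obtain ⟨K, hK0, hK1⟩ := hbig
  set U : Set ℝ := {a : ℝ | 0 ≤ a ∧ 1 < f a} with hUdef
  have hUne : U.Nonempty := ⟨K, hK0.le, hK1⟩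
  have hUbdd : BddBelow U := ⟨0, fun a ha => ha.1⟩
  set αd := sInf U with hαd
  obtain ⟨ε₁, hε₁, hsm⟩ := hsmall
  have hαd_pos : 0 < αd := by
    have h2 : ε₁ / 2 ≤ αd := by
      apply le_csInf hUne
      intro b hb
      by_contra hb2
      push_neg at hb2
      have hb3 : |b| < ε₁ := by
        rw [abs_of_nonneg hb.1]
        linarith
      have := hsm b hb3
      linarith [hb.2]
    linarith
  have hlb : ∀ a : ℝ, 0 ≤ a → a < αd → f a ≤ 1 := by
    intro a ha0 ha
    by_contra h
    push_neg at h
    have : αd ≤ a := csInf_le hUbdd ⟨ha0, h⟩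
    linarith
  have hfαd : f αd = 1 := by
    have hge : 1 ≤ f αd := by
      by_contra h
      push_neg at h
      obtain ⟨ε, hε, hUp⟩ := hU αd (1 - f αd) (by linarith)
      obtain ⟨u, huU, hu⟩ := exists_lt_of_csInf_lt hUne
        (show sInf U < αd + ε by rw [← hαd]; linarith)
      have huge : αd ≤ u := csInf_le hUbdd huU
      have := hUp u (by rw [abs_of_nonneg (by linarith)]; linarith)
      linarith [huU.2]
    have hle : f αd ≤ 1 := by
      by_contra h
      push_neg at h
      obtain ⟨ε, hε, hLo⟩ := hL αd (f αd - 1) (by linarith)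
      set a := αd - min (ε / 2) (αd / 2) with ha
      have h1 : 0 < min (ε / 2) (αd / 2) := lt_min (by linarith) (by linarith)
      have hminle : min (ε / 2) (αd / 2) ≤ αd / 2 := min_le_right _ _
      have hminle2 : min (ε / 2) (αd / 2) ≤ ε / 2 := min_le_left _ _
      have ha0 : 0 ≤ a := by rw [ha]; linarith
      have haαd : a < αd := by rw [ha]; linarith
      have habs : |a - αd| < ε := by
        rw [ha, abs_of_nonpos (by linarith)]
        simp only [neg_sub]
        linarith
      have hx := hLo a habs
      have hy := hlb a ha0 haαd
      linarith
    linarith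
  set G := ({a : ℝ | f a = 1} ∩ Set.Ico 0 αd) ∪ {αd / 2} with hG
  have hGfin : G.Finite := (hFin.inter_of_left _).union (Set.finite_singleton _)
  have hGne : G.Nonempty := ⟨αd / 2, Or.inr rfl⟩
  set α₀ := sSup G with hα₀
  have hα₀G : α₀ ∈ G := hGne.csSup_mem hGfin
  have hα₀ge : αd / 2 ≤ α₀ := le_csSup hGfin.bddAbove (Or.inr rfl)
  have hα₀pos : 0 < α₀ := by linarith
  have hα₀lt : α₀ < αd := by
    rcases hα₀G with h | h
    · exact h.2.2
    · rw [Set.mem_singleton_iff] at h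
      rw [h]
      linarith
  obtain ⟨α₁, hα₁gt, hno⟩ : ∃ α₁, αd < α₁ ∧ ∀ γ ∈ Set.Ioo αd α₁, f γ ≠ 1 := by
    by_cases hH : ({a : ℝ | f a = 1} ∩ Set.Ioi αd).Nonempty
    · have hHfin : ({a : ℝ | f a = 1} ∩ Set.Ioi αd).Finite := hFin.inter_of_left _
      refine ⟨sInf ({a : ℝ | f a = 1} ∩ Set.Ioi αd), (hH.csInf_mem hHfin).2, ?_⟩
      intro γ hγ hγ1
      have hmem : γ ∈ {a : ℝ | f a = 1} ∩ Set.Ioi αd := ⟨hγ1, hγ.1⟩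
      have := csInf_le hHfin.bddBelow hmem
      linarith [hγ.2]
    · exact ⟨αd + 1, by linarith, fun γ hγ hγ1 => hH ⟨γ, hγ1, hγ.1⟩⟩
  refine ⟨α₀, αd, α₁, hα₀pos, hα₀lt, hα₁gt, hfαd, ?_, ?_⟩
  · intro a ha
    have h1 : f a ≤ 1 := hlb a (by linarith [ha.1]) ha.2
    have h2 : f a ≠ 1 := by
      intro h
      have hmem : a ∈ G := Or.inl ⟨h, ⟨by linarith [ha.1], ha.2⟩⟩
      have := le_csSup hGfin.bddAbove hmem
      linarith [ha.1]
    exact lt_of_le_of_ne h1 h2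
  · intro a ha
    by_contra h
    push_neg at h
    have hne1 : f a ≠ 1 := hno a ha
    have hlt1 : f a < 1 := lt_of_le_of_ne h hne1
    obtain ⟨u, huU, hu⟩ := exists_lt_of_csInf_lt hUne
      (show sInf U < a by rw [← hαd]; exact ha.1)
    have hu_gt : αd < u := by
      rcases eq_or_lt_of_le (csInf_le hUbdd huU) with heq | hlt
      · exfalso
        have h2 := huU.2
        rw [← heq, hfαd] at h2
        linarith
      · exact hlt
    have hsub := intermediate_value_Icc' (le_of_lt hu) hcont.continuousOn
    have h1mem : (1 : ℝ) ∈ Set.Icc (f a) (f u) := ⟨hlt1.le, le_of_lt huU.2⟩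
    obtain ⟨γ, hγIcc, hγ1⟩ := hsub h1mem
    have hγmem : γ ∈ Set.Ioo αd α₁ :=
      ⟨lt_of_lt_of_le hu_gt hγIcc.1, lt_of_le_of_lt hγIcc.2 ha.2⟩
    exact hno γ hγmem hγ1
end

section
/- For every d ∈ ℕ there exist real numbers α_{d,0}, α_d, α_{d,1} < 0 with α_{d,1} < α_d < α_{d,0} such that spr(p_{d,α_d}) = 1, spr(p_{d,α}) < 1 for all α ∈ (α_d, α_{d,0}), and spr(p_{d,α}) > 1 for all α ∈ (α_{d,1}, α_d). -/
open Polynomial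

noncomputable def Complex.abs : AbsoluteValue ℂ ℝ where
  toFun z := ‖z‖
  map_mul' := norm_mul
  nonneg' := norm_nonneg
  eq_zero' _ := norm_eq_zero
  add_le' := norm_add_le

lemma Complex.norm_eq_abs (z : ℂ) : ‖z‖ = Complex.abs z := rfl

lemma Complex.abs_ofReal (r : ℝ) : Complex.abs (r : ℂ) = |r| := Complex.norm_real r

namespace Stmt7Aux

/-- product of a multiset of reals, all ≥ c ≥ 0, is ≥ c ^ card -/
lemma pow_card_le_prod' (t : Multiset ℝ) (c : ℝ) (hc : 0 ≤ c)
    (h : ∀ x ∈ t, c ≤ x) : c ^ Multiset.card t ≤ t.prod := by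
  induction t using Multiset.induction_on with
  | empty => simp
  | cons a s ih =>
      have ha : c ≤ a := h a (Multiset.mem_cons_self a s)
      have hs : c ^ Multiset.card s ≤ s.prod :=
        ih (fun x hx => h x (Multiset.mem_cons_of_mem hx))
      simp only [Multiset.prod_cons, Multiset.card_cons, pow_succ]
      calc c ^ Multiset.card s * c ≤ s.prod * a := by
            apply mul_le_mul hs ha hc
            exact le_trans (pow_nonneg hc _) hs
        _ = a * s.prod := mul_comm _ _

lemma prod_le_pow_card' (t : Multiset ℝ) (c : ℝ)
    (h : ∀ x ∈ t, 0 ≤ x ∧ x ≤ c) : t.prod ≤ c ^ Multiset.card t := by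
  induction t using Multiset.induction_on with
  | empty => simp
  | cons a s ih =>
      have ha := h a (Multiset.mem_cons_self a s)
      have hs : s.prod ≤ c ^ Multiset.card s :=
        ih (fun x hx => h x (Multiset.mem_cons_of_mem hx))
      have hsnn : 0 ≤ s.prod := Multiset.prod_nonneg (fun x hx => (h x (Multiset.mem_cons_of_mem hx)).1)
      simp only [Multiset.prod_cons, Multiset.card_cons, pow_succ]
      calc a * s.prod ≤ c * c ^ Multiset.card s := by
            apply mul_le_mul ha.2 hs hsnn (le_trans ha.1 ha.2)
        _ = c ^ Multiset.card s * c := mul_comm _ _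

lemma abs_multiset_sum_le (t : Multiset ℂ) :
    Complex.abs t.sum ≤ (t.map Complex.abs).sum := by
  induction t using Multiset.induction_on with
  | empty => simp
  | cons a s ih =>
      simp only [Multiset.sum_cons, Multiset.map_cons]
      exact le_trans (Complex.abs.add_le _ _) (by gcongr)

lemma multiset_sum_le_card_mul (t : Multiset ℝ) (c : ℝ) (h : ∀ x ∈ t, x ≤ c) :
    t.sum ≤ (Multiset.card t : ℝ) * c := by
  induction t using Multiset.induction_on with
  | empty => simp
  | cons a s ih =>
      have hs := ih (fun x hx => h x (Multiset.mem_cons_of_mem hx))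
      simp only [Multiset.sum_cons, Multiset.card_cons]
      push_cast
      nlinarith [h a (Multiset.mem_cons_self a s)]

/-- root set as a finset -/
lemma setOf_isRoot_eq (p : ℂ[X]) (hp : p ≠ 0) :
    {z : ℂ | p.IsRoot z} = (p.roots.toFinset : Set ℂ) := by
  ext z
  simp [Multiset.mem_toFinset, mem_roots, hp]

lemma roots_card_eq (p : ℂ[X]) (hm : p.Monic) :
    Multiset.card p.roots = p.natDegree := by
  have := IsAlgClosed.splits p
  exact (splits_iff_card_roots.mp this)

lemma eq_prod_roots (p : ℂ[X]) (hm : p.Monic) :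
    p = (p.roots.map fun a => X - C a).prod :=
  (IsAlgClosed.splits p).eq_prod_roots_of_monic hm

lemma abs_eval_eq_prod (p : ℂ[X]) (hm : p.Monic) (z : ℂ) :
    Complex.abs (p.eval z) = ((p.roots.map fun a => Complex.abs (z - a))).prod := by
  conv_lhs => rw [eq_prod_roots p hm]
  rw [eval_multiset_prod]
  rw [map_multiset_prod Complex.abs]
  rw [Multiset.map_map, Multiset.map_map]
  congr 1
  ext a
  simp

/-- Cauchy bound -/
lemma root_abs_le (p : ℂ[X]) (hm : p.Monic) {z : ℂ} (hz : p.IsRoot z) :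
    Complex.abs z ≤ 1 + ∑ i ∈ Finset.range p.natDegree, Complex.abs (p.coeff i) := by
  set n := p.natDegree with hn
  set S := ∑ i ∈ Finset.range n, Complex.abs (p.coeff i) with hS
  have hS0 : 0 ≤ S := Finset.sum_nonneg fun i _ => AbsoluteValue.nonneg _ _
  by_contra hcon
  push_neg at hcon
  have hz1 : 1 ≤ Complex.abs z := by linarith
  have hn0 : n ≠ 0 := by
    intro h0
    have : p = 1 := hm.natDegree_eq_zero.mp h0
    rw [this] at hz
    simp [IsRoot] at hz
  have heval : (0:ℂ) = ∑ i ∈ Finset.range (n + 1), p.coeff i * z ^ i := by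
    rw [← eval_eq_sum_range]; exact hz.symm
  have hcn : p.coeff n = 1 := by
    have := hm.leadingCoeff
    rwa [leadingCoeff, ← hn] at this
  have hsplit : (0:ℂ) = z ^ n + ∑ i ∈ Finset.range n, p.coeff i * z ^ i := by
    rw [Finset.sum_range_succ, hcn] at heval
    linear_combination heval
  have hzn : Complex.abs (z ^ n) ≤ Complex.abs (∑ i ∈ Finset.range n, p.coeff i * z ^ i) := by
    have : z ^ n = -(∑ i ∈ Finset.range n, p.coeff i * z ^ i) := by
      rw [eq_neg_iff_add_eq_zero]; linear_combination -hsplit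
    rw [this, map_neg_eq_map]
  have hbound : Complex.abs (∑ i ∈ Finset.range n, p.coeff i * z ^ i)
      ≤ S * Complex.abs z ^ (n - 1) := by
    calc Complex.abs (∑ i ∈ Finset.range n, p.coeff i * z ^ i)
        ≤ ∑ i ∈ Finset.range n, Complex.abs (p.coeff i * z ^ i) :=
          Complex.abs.sum_le _ _
      _ ≤ ∑ i ∈ Finset.range n, Complex.abs (p.coeff i) * Complex.abs z ^ (n - 1) := by
          apply Finset.sum_le_sum
          intro i hi
          rw [map_mul, map_pow]
          apply mul_le_mul_of_nonneg_left _ (AbsoluteValue.nonneg _ _)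
          apply pow_le_pow_right₀ hz1
          have := Finset.mem_range.mp hi; omega
      _ = S * Complex.abs z ^ (n - 1) := by rw [← Finset.sum_mul]
  have hznval : Complex.abs (z ^ n) = Complex.abs z ^ (n-1) * Complex.abs z := by
    rw [map_pow]
    conv_lhs => rw [show n = (n-1)+1 by omega]
    ring
  have hpos : (0:ℝ) < Complex.abs z ^ (n - 1) := by positivity
  have : Complex.abs z ≤ S := by
    have h1 : Complex.abs z ^ (n-1) * Complex.abs z ≤ S * Complex.abs z ^ (n-1) := by
      rw [← hznval]; exact le_trans hzn hbound
    nlinarith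
  linarith

/-- if |p(z)| < ε^n then there is a root within ε of z -/
lemma exists_root_near (p : ℂ[X]) (hm : p.Monic) (hdeg : 0 < p.natDegree) (z : ℂ)
    {ε : ℝ} (hε : 0 < ε) (h : Complex.abs (p.eval z) < ε ^ p.natDegree) :
    ∃ r, p.IsRoot r ∧ Complex.abs (z - r) < ε := by
  by_contra hcon
  push_neg at hcon
  have hall : ∀ x ∈ p.roots.map fun a => Complex.abs (z - a), ε ≤ x := by
    intro x hx
    obtain ⟨a, ha, rfl⟩ := Multiset.mem_map.mp hx
    exact hcon a (isRoot_of_mem_roots ha)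
  have := pow_card_le_prod' _ ε (le_of_lt hε) hall
  rw [Multiset.card_map, roots_card_eq p hm] at this
  rw [abs_eval_eq_prod p hm z] at h
  linarith

/-- eval bound on a disk -/
lemma abs_eval_le (p : ℂ[X]) {z : ℂ} {R : ℝ} (hR : 1 ≤ R) (hz : Complex.abs z ≤ R) :
    Complex.abs (p.eval z) ≤
      (∑ i ∈ Finset.range (p.natDegree + 1), Complex.abs (p.coeff i)) * R ^ p.natDegree := by
  rw [eval_eq_sum_range]
  calc Complex.abs (∑ i ∈ Finset.range (p.natDegree+1), p.coeff i * z ^ i)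
      ≤ ∑ i ∈ Finset.range (p.natDegree+1), Complex.abs (p.coeff i * z ^ i) :=
        Complex.abs.sum_le _ _
    _ ≤ ∑ i ∈ Finset.range (p.natDegree+1), Complex.abs (p.coeff i) * R ^ p.natDegree := by
        apply Finset.sum_le_sum
        intro i hi
        rw [map_mul, map_pow]
        have h1 : Complex.abs z ^ i ≤ R ^ i :=
          pow_le_pow_left₀ (AbsoluteValue.nonneg _ _) hz i
        have h2 : R ^ i ≤ R ^ p.natDegree := by
          apply pow_le_pow_right₀ hR
          simp at hi; omega
        exact mul_le_mul_of_nonneg_left (le_trans h1 h2) (AbsoluteValue.nonneg _ _)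
    _ = _ := by rw [← Finset.sum_mul]


noncomputable def Pc (N D : ℝ[X]) (d : ℕ) (α : ℝ) : ℂ[X] :=
  (pda N D d α).map (algebraMap ℝ ℂ)

lemma sprR_eq (N D : ℝ[X]) (d : ℕ) (α : ℝ) : sprR (pda N D d α) = spr (Pc N D d α) := rfl

section Monic

variable {N D : ℝ[X]}

lemma degree_sub_lt' (hD : D.Monic) (hdeg : N.degree < D.degree) (d : ℕ) (α : ℝ) : (C α * ((X - 1) * N)).degree < (X ^ (d + 1) * D : ℝ[X]).degree := by
  have hD0 : D ≠ 0 := hD.ne_zero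
  have h1 : (X ^ (d + 1) * D : ℝ[X]).degree = (d + 1 : ℕ) + D.degree := by
    rw [degree_mul, degree_X_pow]
  have h2 : (C α * ((X - 1) * N)).degree ≤ 1 + N.degree := by
    calc (C α * ((X - 1) * N)).degree ≤ (C α).degree + ((X - 1) * N).degree := degree_mul_le _ _
      _ ≤ 0 + ((X - 1) * N).degree := by
          apply add_le_add_left degree_C_le
      _ = ((X - 1) * N).degree := by rw [zero_add]
      _ = (X - 1 : ℝ[X]).degree + N.degree := degree_mul
      _ = 1 + N.degree := by
          rw [show (X - 1 : ℝ[X]) = X - C 1 by rw [C_1], degree_X_sub_C]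
  have h3 : (1 : WithBot ℕ) + N.degree < 1 + D.degree := by
    rcases eq_or_ne N.degree ⊥ with h | h
    · rw [h]
      rw [WithBot.add_bot, degree_eq_natDegree hD0]
      exact WithBot.bot_lt_coe _
    · exact WithBot.add_lt_add_left (by simp) hdeg
  have h4 : (1 : WithBot ℕ) + D.degree ≤ (d + 1 : ℕ) + D.degree := by
    apply add_le_add_left
    exact_mod_cast WithBot.coe_le_coe.mpr (by omega : 1 ≤ d + 1)
  rw [h1]
  exact lt_of_le_of_lt h2 (lt_of_lt_of_le h3 h4)

lemma pda_monic (hD : D.Monic) (hdeg : N.degree < D.degree) (d : ℕ) (α : ℝ) : (pda N D d α).Monic := by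
  apply Polynomial.Monic.sub_of_left ((monic_X_pow (d+1)).mul hD)
  exact degree_sub_lt' hD hdeg d α

lemma pda_natDegree (hD : D.Monic) (hdeg : N.degree < D.degree) (d : ℕ) (α : ℝ) : (pda N D d α).natDegree = d + 1 + D.natDegree := by
  have h := degree_sub_eq_left_of_degree_lt (degree_sub_lt' hD hdeg d α)
  have : (pda N D d α).degree = ((d + 1 + D.natDegree : ℕ) : WithBot ℕ) := by
    rw [pda, h, degree_mul, degree_X_pow, degree_eq_natDegree hD.ne_zero]
    push_cast; ring
  exact natDegree_eq_of_degree_eq_some this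

lemma Pc_monic (hD : D.Monic) (hdeg : N.degree < D.degree) (d : ℕ) (α : ℝ) : (Pc N D d α).Monic := (pda_monic hD hdeg d α).map _

lemma Pc_natDegree (hD : D.Monic) (hdeg : N.degree < D.degree) (d : ℕ) (α : ℝ) : (Pc N D d α).natDegree = d + 1 + D.natDegree := by
  rw [Pc, (pda_monic hD hdeg d α).natDegree_map, pda_natDegree hD hdeg]

lemma Pc_roots_card (hD : D.Monic) (hdeg : N.degree < D.degree) (d : ℕ) (α : ℝ) :
    Multiset.card (Pc N D d α).roots = d + 1 + D.natDegree := by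
  have := IsAlgClosed.splits (Pc N D d α)
  rw [splits_iff_card_roots.mp this, Pc_natDegree hD hdeg]

end Monic

lemma Pc_eval (N D : ℝ[X]) (d : ℕ) (α : ℝ) (z : ℂ) :
    (Pc N D d α).eval z =
      z ^ (d + 1) * aeval z D - (α : ℂ) * ((z - 1) * aeval z N) := by
  rw [Pc, eval_map, ← aeval_def, pda]
  simp only [map_sub, map_mul, map_pow, aeval_X, aeval_C, map_one, map_sub, aeval_one]
  simp [Complex.coe_algebraMap]

lemma Pc_eval_sub (N D : ℝ[X]) (d : ℕ) (α β : ℝ) (z : ℂ) :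
    (Pc N D d β).eval z =
      (Pc N D d α).eval z + ((α : ℂ) - β) * ((z - 1) * aeval z N) := by
  rw [Pc_eval, Pc_eval]; ring

lemma spr_attained (p : ℂ[X]) (hm : p.Monic) (hdeg : 0 < p.natDegree) :
    ∃ z, p.IsRoot z ∧ Complex.abs z = spr p := by
  have hp : p ≠ 0 := hm.ne_zero
  have hfin : (Complex.abs '' {z : ℂ | p.IsRoot z}).Finite := by
    rw [setOf_isRoot_eq p hp]
    exact (Set.Finite.image _ (p.roots.toFinset.finite_toSet))
  have hne : (Complex.abs '' {z : ℂ | p.IsRoot z}).Nonempty := by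
    obtain ⟨z, hz⟩ := Complex.exists_root (f := p) (by
      rw [← natDegree_pos_iff_degree_pos]; exact hdeg)
    exact ⟨Complex.abs z, z, hz, rfl⟩
  obtain ⟨z, hz, hz'⟩ := Set.Nonempty.csSup_mem hne hfin
  exact ⟨z, hz, hz'⟩

lemma le_spr (p : ℂ[X]) (hp : p ≠ 0) {z : ℂ} (hz : p.IsRoot z) :
    Complex.abs z ≤ spr p := by
  have hfin : (Complex.abs '' {z : ℂ | p.IsRoot z}).Finite := by
    rw [setOf_isRoot_eq p hp]
    exact (Set.Finite.image _ (p.roots.toFinset.finite_toSet))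
  exact le_csSup hfin.bddAbove ⟨z, hz, rfl⟩

noncomputable def Tc (N : ℝ[X]) : ℂ[X] := ((X - 1) * N).map (algebraMap ℝ ℂ)

lemma Tc_eval (N : ℝ[X]) (z : ℂ) : (Tc N).eval z = (z - 1) * aeval z N := by
  rw [Tc, eval_map, ← aeval_def]
  simp

lemma pda_sub_poly (N D : ℝ[X]) (d : ℕ) (α β : ℝ) :
    pda N D d β = pda N D d α + C (α - β) * ((X - 1) * N) := by
  rw [pda, pda, C_sub]; ring

lemma Pc_sub_poly (N D : ℝ[X]) (d : ℕ) (α β : ℝ) :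
    Pc N D d β = Pc N D d α + C ((α : ℂ) - β) * Tc N := by
  rw [Pc, Pc, Tc, pda_sub_poly N D d α β, Polynomial.map_add, Polynomial.map_mul, map_C]
  norm_num

lemma f_cont {N D : ℝ[X]} (hD : D.Monic) (hdeg : N.degree < D.degree) (d : ℕ) :
    Continuous (fun α : ℝ => spr (Pc N D d α)) := by
  set ν := d + 1 + D.natDegree with hν
  have hν0 : 0 < ν := by omega
  rw [Metric.continuous_iff]
  intro α ε hε
  set ε' := ε / 2 with hε'def
  have hε' : 0 < ε' := by positivity
  obtain ⟨z₀, hz₀root, hz₀abs⟩ := spr_attained (Pc N D d α) (Pc_monic hD hdeg d α)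
    (by rw [Pc_natDegree hD hdeg]; omega)
  set K₀ : ℝ := Complex.abs ((z₀ - 1) * aeval z₀ N) + 1 with hK₀
  have hK₀pos : 0 < K₀ := by
    have := Complex.abs.nonneg ((z₀ - 1) * aeval z₀ N)
    rw [hK₀]; linarith
  set R : ℝ := 1 + ∑ i ∈ Finset.range ν,
      (Complex.abs ((Pc N D d α).coeff i) + Complex.abs ((Tc N).coeff i)) with hR
  have hR1 : 1 ≤ R := by
    rw [hR]
    have : 0 ≤ ∑ i ∈ Finset.range ν,
        (Complex.abs ((Pc N D d α).coeff i) + Complex.abs ((Tc N).coeff i)) :=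
      Finset.sum_nonneg fun i _ =>
        add_nonneg (Complex.abs.nonneg _) (Complex.abs.nonneg _)
    linarith
  set K : ℝ := (∑ i ∈ Finset.range ((Tc N).natDegree + 1), Complex.abs ((Tc N).coeff i))
      * R ^ (Tc N).natDegree + 1 with hK
  have hRp : (0:ℝ) < R := lt_of_lt_of_le one_pos hR1
  have hKpos : 0 < K := by
    have h1 : 0 ≤ ∑ i ∈ Finset.range ((Tc N).natDegree + 1), Complex.abs ((Tc N).coeff i) :=
      Finset.sum_nonneg fun i _ => Complex.abs.nonneg _
    have h2 : 0 < R ^ (Tc N).natDegree := pow_pos hRp _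
    rw [hK]
    nlinarith
  set δ : ℝ := min 1 (min (ε' ^ ν / K₀) (ε' ^ ν / K)) with hδdef
  have hεν : 0 < ε' ^ ν := pow_pos hε' ν
  have hδpos : 0 < δ := by
    apply lt_min one_pos
    exact lt_min (div_pos hεν hK₀pos) (div_pos hεν hKpos)
  have hδK₀ : δ * K₀ ≤ ε' ^ ν := by
    have h : δ ≤ ε' ^ ν / K₀ := le_trans (min_le_right _ _) (min_le_left _ _)
    calc δ * K₀ ≤ (ε' ^ ν / K₀) * K₀ := by nlinarith
      _ = ε' ^ ν := div_mul_cancel₀ _ (ne_of_gt hK₀pos)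
  have hδK : δ * K ≤ ε' ^ ν := by
    have h : δ ≤ ε' ^ ν / K := le_trans (min_le_right _ _) (min_le_right _ _)
    calc δ * K ≤ (ε' ^ ν / K) * K := by nlinarith
      _ = ε' ^ ν := div_mul_cancel₀ _ (ne_of_gt hKpos)
  refine ⟨δ, hδpos, ?_⟩
  intro β hβ
  rw [Real.dist_eq] at hβ ⊢
  have habsαβ : Complex.abs ((α : ℂ) - β) = |β - α| := by
    rw [show ((α:ℂ) - β) = (((α - β : ℝ)):ℂ) by push_cast; ring, Complex.abs_ofReal,
      abs_sub_comm]
  have habsβα : Complex.abs ((β : ℂ) - α) = |β - α| := by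
    rw [show ((β:ℂ) - α) = (((β - α : ℝ)):ℂ) by push_cast; ring, Complex.abs_ofReal]
  -- lower bound
  have hlow : spr (Pc N D d α) - ε' < spr (Pc N D d β) := by
    have heval : Complex.abs ((Pc N D d β).eval z₀) < ε' ^ ν := by
      rw [Pc_eval_sub N D d α β z₀, show (Pc N D d α).eval z₀ = 0 from hz₀root, zero_add,
        map_mul, habsαβ]
      have h1 : Complex.abs ((z₀ - 1) * aeval z₀ N) ≤ K₀ := by rw [hK₀]; linarith
      nlinarith [abs_nonneg (β - α), Complex.abs.nonneg ((z₀ - 1) * aeval z₀ N)]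
    obtain ⟨r, hrroot, hrnear⟩ := exists_root_near (Pc N D d β) (Pc_monic hD hdeg d β)
      (by rw [Pc_natDegree hD hdeg]; omega) z₀ hε'
      (by rw [Pc_natDegree hD hdeg]; exact heval)
    have h1 : Complex.abs z₀ - Complex.abs r ≤ Complex.abs (z₀ - r) := by
      simpa [Complex.norm_eq_abs] using norm_sub_norm_le z₀ r
    have h2 : Complex.abs r ≤ spr (Pc N D d β) :=
      le_spr _ (Pc_monic hD hdeg d β).ne_zero hrroot
    rw [← hz₀abs]
    linarith
  -- upper bound
  have hup : spr (Pc N D d β) ≤ spr (Pc N D d α) + ε' := by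
    obtain ⟨r, hrroot, hrabs⟩ := spr_attained (Pc N D d β) (Pc_monic hD hdeg d β)
      (by rw [Pc_natDegree hD hdeg]; omega)
    rw [← hrabs]
    by_contra hcon
    push_neg at hcon
    have hrR : Complex.abs r ≤ R := by
      have h1 := root_abs_le (Pc N D d β) (Pc_monic hD hdeg d β) hrroot
      rw [Pc_natDegree hD hdeg] at h1
      have h2 : ∀ i, Complex.abs ((Pc N D d β).coeff i)
          ≤ Complex.abs ((Pc N D d α).coeff i) + Complex.abs ((Tc N).coeff i) := by
        intro i
        rw [Pc_sub_poly N D d α β, coeff_add, coeff_C_mul]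
        refine le_trans (Complex.abs.add_le _ _) ?_
        rw [map_mul]
        have hδ1 : |β - α| ≤ 1 := le_trans (le_of_lt hβ) (min_le_left _ _)
        nlinarith [Complex.abs.nonneg ((Tc N).coeff i), habsαβ,
          Complex.abs.nonneg ((Pc N D d α).coeff i),
          Complex.abs.nonneg ((α : ℂ) - (β:ℂ)), abs_nonneg (β - α)]
      have h3 : ∑ i ∈ Finset.range ν, Complex.abs ((Pc N D d β).coeff i)
          ≤ ∑ i ∈ Finset.range ν,
            (Complex.abs ((Pc N D d α).coeff i) + Complex.abs ((Tc N).coeff i)) :=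
        Finset.sum_le_sum fun i _ => h2 i
      rw [hR]; linarith
    have hev1 : Complex.abs ((Pc N D d α).eval r) < ε' ^ ν := by
      have h1 : (Pc N D d α).eval r = ((β : ℂ) - α) * ((r - 1) * aeval r N) := by
        have h0 := Pc_eval_sub N D d β α r
        rw [show (Pc N D d β).eval r = 0 from hrroot, zero_add] at h0
        exact h0
      rw [h1, map_mul, habsβα]
      have h2 : Complex.abs ((r - 1) * aeval r N) < K := by
        rw [← Tc_eval]
        have := abs_eval_le (Tc N) hR1 hrR
        rw [hK]; linarith
      nlinarith [abs_nonneg (β - α), Complex.abs.nonneg ((r - 1) * aeval r N)]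
    have hev2 : ε' ^ ν ≤ Complex.abs ((Pc N D d α).eval r) := by
      rw [abs_eval_eq_prod _ (Pc_monic hD hdeg d α)]
      have hcard : Multiset.card ((Pc N D d α).roots.map
          (fun a => Complex.abs (r - a))) = ν := by
        rw [Multiset.card_map, Pc_roots_card hD hdeg]
      rw [← hcard]
      apply pow_card_le_prod' _ _ (le_of_lt hε')
      intro x hx
      obtain ⟨a, ha, rfl⟩ := Multiset.mem_map.mp hx
      have haroot : (Pc N D d α).IsRoot a := isRoot_of_mem_roots ha
      have h5 : Complex.abs a ≤ spr (Pc N D d α) :=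
        le_spr _ (Pc_monic hD hdeg d α).ne_zero haroot
      have h6 : Complex.abs r - Complex.abs a ≤ Complex.abs (r - a) := by
        simpa [Complex.norm_eq_abs] using norm_sub_norm_le r a
      linarith
    linarith
  rw [abs_sub_lt_iff]
  constructor <;> [linarith; linarith]

lemma f_zero_lt_one {N D : ℝ[X]} (hD : D.Monic) (hdeg : N.degree < D.degree)
    (hDroots : ∀ z : ℂ, Polynomial.aeval z D = 0 → Complex.abs z < 1) (d : ℕ) :
    spr (Pc N D d 0) < 1 := by
  obtain ⟨z, hzroot, hzabs⟩ := spr_attained (Pc N D d 0) (Pc_monic hD hdeg d 0)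
    (by rw [Pc_natDegree hD hdeg]; omega)
  rw [← hzabs]
  have h0 : (Pc N D d 0).eval z = z ^ (d+1) * aeval z D := by
    rw [Pc_eval]; push_cast; ring
  have hz0 : z ^ (d+1) * aeval z D = 0 := by rw [← h0]; exact hzroot
  rcases mul_eq_zero.mp hz0 with h | h
  · have : z = 0 := pow_eq_zero_iff (by omega) |>.mp h
    rw [this]; simpa using one_pos
  · exact hDroots z h

lemma choose_le_two_pow (n j : ℕ) : (n.choose j : ℝ) ≤ 2 ^ n := by
  have h : n.choose j ≤ 2 ^ n := by
    rcases le_or_gt j n with hj | hj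
    · calc n.choose j ≤ ∑ i ∈ Finset.range (n+1), n.choose i :=
          Finset.single_le_sum (fun i _ => Nat.zero_le _) (Finset.mem_range.mpr (by omega))
        _ = 2 ^ n := Nat.sum_range_choose n
    · rw [Nat.choose_eq_zero_of_lt hj]; exact Nat.zero_le _
  calc (n.choose j : ℝ) ≤ ((2:ℕ) ^ n : ℕ) := by exact_mod_cast h
    _ = 2 ^ n := by push_cast; ring

lemma coeff_bound_of_spr_le_one {N D : ℝ[X]} (hD : D.Monic) (hdeg : N.degree < D.degree)
    (d : ℕ) (α : ℝ) (hspr : spr (Pc N D d α) ≤ 1) (k : ℕ) (hk : k ≤ d + 1 + D.natDegree) :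
    Complex.abs ((Pc N D d α).coeff k) ≤ 2 ^ (d + 1 + D.natDegree) := by
  set ν := d + 1 + D.natDegree with hν
  set p := Pc N D d α with hp
  have hmon := Pc_monic hD hdeg d α
  have hnd : p.natDegree = ν := Pc_natDegree hD hdeg d α
  have hcard : Multiset.card p.roots = p.natDegree := by
    rw [hnd, Pc_roots_card hD hdeg]
  have hvieta := Polynomial.coeff_eq_esymm_roots_of_card hcard
    (k := k) (by rw [hnd]; exact hk)
  rw [hmon.leadingCoeff, one_mul] at hvieta
  rw [hvieta, map_mul, map_pow]
  have habs1 : Complex.abs (-1) = 1 := by simp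
  rw [habs1, one_pow, one_mul]
  set j := p.natDegree - k with hj
  have hesymm : Complex.abs (p.roots.esymm j) ≤ (Nat.choose ν j : ℝ) := by
    rw [Multiset.esymm]
    refine le_trans (abs_multiset_sum_le _) ?_
    have hcard2 : Multiset.card (((p.roots.powersetCard j).map Multiset.prod).map
        Complex.abs) = Nat.choose ν j := by
      rw [Multiset.card_map, Multiset.card_map, Multiset.card_powersetCard, hcard, hnd]
    have := multiset_sum_le_card_mul (((p.roots.powersetCard j).map Multiset.prod).map
        Complex.abs) 1 ?_
    · rw [hcard2] at this
      simpa using this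
    · intro x hx
      obtain ⟨y, hy, rfl⟩ := Multiset.mem_map.mp hx
      obtain ⟨t, ht, rfl⟩ := Multiset.mem_map.mp hy
      have htsub : t ≤ p.roots := (Multiset.mem_powersetCard.mp ht).1
      rw [map_multiset_prod]
      have h1 : (t.map Complex.abs).prod ≤ 1 ^ Multiset.card (t.map Complex.abs) := by
        apply prod_le_pow_card'
        intro x hx
        obtain ⟨a, ha, rfl⟩ := Multiset.mem_map.mp hx
        refine ⟨Complex.abs.nonneg a, ?_⟩
        have : p.IsRoot a := isRoot_of_mem_roots (Multiset.mem_of_le htsub ha)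
        exact le_trans (le_spr p hmon.ne_zero this) hspr
      simpa using h1
  refine le_trans hesymm ?_
  exact choose_le_two_pow ν j

lemma exists_A {N D : ℝ[X]} (hD : D.Monic) (hdeg : N.degree < D.degree) (hN : N ≠ 0)
    (d : ℕ) : ∃ A : ℝ, A < 0 ∧ 1 < spr (Pc N D d A) := by
  set ν := d + 1 + D.natDegree with hν
  set T : ℝ[X] := (X - 1) * N with hT
  have hTne : T ≠ 0 := by
    apply mul_ne_zero _ hN
    rw [show (X - 1 : ℝ[X]) = X - C 1 by rw [C_1]]
    exact X_sub_C_ne_zero 1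
  set k₀ := T.natTrailingDegree with hk₀
  set b := T.coeff k₀ with hb
  have hbne : b ≠ 0 := by
    rw [hb, hk₀]
    exact trailingCoeff_eq_zero.not.mpr hTne
  have hk₀lt : k₀ < ν := by
    have h1 : k₀ ≤ T.natDegree := natTrailingDegree_le_natDegree T
    have h2 : T.natDegree = 1 + N.natDegree := by
      rw [hT, natDegree_mul (by
        rw [show (X - 1 : ℝ[X]) = X - C 1 by rw [C_1]]
        exact X_sub_C_ne_zero 1) hN]
      congr 1
      rw [show (X - 1 : ℝ[X]) = X - C 1 by rw [C_1]]
      exact natDegree_X_sub_C 1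
    have h3 : N.natDegree < D.natDegree := natDegree_lt_natDegree hN hdeg
    omega
  set c := (X ^ (d+1) * D : ℝ[X]).coeff k₀ with hc
  have hcoeff : ∀ α : ℝ, (pda N D d α).coeff k₀ = c - α * b := by
    intro α
    rw [pda, coeff_sub, coeff_C_mul, ← hT, ← hb, ← hc]
  set A : ℝ := -((2 ^ ν + |c| + 1) / |b|) with hA
  have hbpos : 0 < |b| := abs_pos.mpr hbne
  have hApos : 0 < (2 ^ ν + |c| + 1) / |b| := by
    apply div_pos _ hbpos
    have : (0:ℝ) ≤ |c| := abs_nonneg c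
    have : (0:ℝ) < 2 ^ ν := by positivity
    linarith
  refine ⟨A, by rw [hA]; linarith, ?_⟩
  by_contra hcon
  push_neg at hcon
  have hb1 := coeff_bound_of_spr_le_one hD hdeg d A hcon k₀ (le_of_lt hk₀lt)
  have hcoefmap : (Pc N D d A).coeff k₀ = ((c - A * b : ℝ) : ℂ) := by
    rw [Pc, coeff_map, hcoeff A]
    rfl
  rw [hcoefmap, Complex.abs_ofReal] at hb1
  have hAb : |A * b| = 2 ^ ν + |c| + 1 := by
    rw [abs_mul, hA, abs_neg, abs_of_pos hApos, div_mul_cancel₀ _ (ne_of_gt hbpos)]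
  have h9 : 2 ^ ν + 1 ≤ |c - A * b| := by
    have := abs_sub_abs_le_abs_sub (A * b) c
    rw [abs_sub_comm] at this
    rw [hAb] at this
    linarith [this]
  linarith


lemma rev_eval (p : ℂ[X]) {z : ℂ} (hz : z ≠ 0) :
    p.reverse.eval z = z ^ p.natDegree * p.eval z⁻¹ := by
  haveI : Invertible (z⁻¹) := invertibleOfNonzero (inv_ne_zero hz)
  have h := eval₂_reverse_mul_pow (RingHom.id ℂ) (z⁻¹) p
  have hinv : (⅟(z⁻¹) : ℂ) = z := by rw [invOf_eq_inv, inv_inv]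
  rw [hinv] at h
  have h2 : p.reverse.eval z * (z⁻¹) ^ p.natDegree = p.eval z⁻¹ := by
    exact h
  rw [inv_pow] at h2
  field_simp at h2
  rw [h2]; ring

lemma Cfinite {N D : ℝ[X]} (hco : IsCoprime N D) (hD : D.Monic)
    (hdeg : N.degree < D.degree)
    (hDroots : ∀ z : ℂ, Polynomial.aeval z D = 0 → Complex.abs z < 1)
    (hN : N ≠ 0)
    (hNcirc : ∀ z : ℂ, Complex.abs z = 1 → Polynomial.aeval z N ≠ 0) (d : ℕ) :
    {α : ℝ | spr (Pc N D d α) = 1}.Finite := by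
  set n := D.natDegree with hn
  set m := N.natDegree with hm
  set Nc : ℂ[X] := N.map (algebraMap ℝ ℂ) with hNc
  set Dc : ℂ[X] := D.map (algebraMap ℝ ℂ) with hDc
  have hinj : Function.Injective (algebraMap ℝ ℂ) := (algebraMap ℝ ℂ).injective
  have haevD : ∀ z : ℂ, aeval z D = Dc.eval z := fun z => by
    rw [hDc, eval_map, aeval_def]
  have haevN : ∀ z : ℂ, aeval z N = Nc.eval z := fun z => by
    rw [hNc, eval_map, aeval_def]
  have hmn : m < n := natDegree_lt_natDegree hN hdeg
  have hNcne : Nc ≠ 0 := fun h => hN (Polynomial.map_eq_zero_iff hinj |>.mp h)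
  have hDcmon : Dc.Monic := hD.map _
  have hnatD : Dc.natDegree = n := by rw [hDc, natDegree_map_eq_of_injective hinj]
  have hnatN : Nc.natDegree = m := by rw [hNc, natDegree_map_eq_of_injective hinj]
  have hcoC : IsCoprime Nc Dc := by
    have := hco.map (Polynomial.mapRingHom (algebraMap ℝ ℂ))
    simpa using this
  have hnocommon : ∀ z : ℂ, Nc.eval z = 0 → Dc.eval z = 0 → False := by
    intro z h1 h2
    obtain ⟨a, b, hab⟩ := hcoC
    have := congrArg (eval z) hab
    simp [h1, h2] at this
  set Qc : ℂ[X] := X ^ (2*d + n + 2) * (Dc * Nc.reverse) + X ^ (m+1) * (Nc * Dc.reverse)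
    with hQc
  -- Qc is not zero
  have hQne : Qc ≠ 0 := by
    by_cases hN0 : N.coeff 0 = 0
    · -- then D.coeff 0 ≠ 0; evaluate at a root of Dc
      have hD0 : D.coeff 0 ≠ 0 := by
        intro hD0
        obtain ⟨a, b, hab⟩ := hco
        have := congrArg (eval 0) hab
        simp only [eval_add, eval_mul, eval_one, ← coeff_zero_eq_eval_zero, hN0, hD0,
          mul_zero, add_zero, zero_add] at this
        exact zero_ne_one this
      obtain ⟨lam, hlam⟩ := Complex.exists_root (f := Dc) (by
        rw [← natDegree_pos_iff_degree_pos, hnatD]; omega)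
      have hlam' : Dc.eval lam = 0 := hlam
      have hlamabs : Complex.abs lam < 1 := hDroots lam (by rw [haevD]; exact hlam')
      have hlamne : lam ≠ 0 := by
        intro h
        rw [h, ← coeff_zero_eq_eval_zero, hDc, coeff_map] at hlam'
        exact hD0 (hinj (by simpa using hlam'))
      intro hQ0
      have hev : Qc.eval lam = 0 := by rw [hQ0]; simp
      rw [hQc] at hev
      simp only [eval_add, eval_mul, eval_pow, eval_X, hlam', zero_mul, mul_zero,
        zero_add, add_zero] at hev
      rcases mul_eq_zero.mp hev with h | h
      · exact pow_ne_zero _ hlamne h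
      rcases mul_eq_zero.mp h with h' | h'
      · exact hnocommon lam h' hlam'
      · rw [rev_eval Dc hlamne, hnatD] at h'
        rcases mul_eq_zero.mp h' with h'' | h''
        · exact pow_ne_zero _ hlamne h''
        · have : Complex.abs lam⁻¹ < 1 := hDroots _ (by rw [haevD]; exact h'')
          rw [map_inv₀] at this
          have h5 : 0 < Complex.abs lam := by
            rw [AbsoluteValue.pos_iff]; exact hlamne
          have h6 : Complex.abs lam * Complex.abs lam⁻¹ = 1 := by
            rw [← map_mul, mul_inv_cancel₀ hlamne]; simp
          rw [map_inv₀] at h6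
          nlinarith
    · -- coefficient m+1 of Qc is nonzero
      intro hQ0
      have h1 : Qc.coeff (m+1) = Nc.coeff 0 * Dc.reverse.coeff 0 := by
        rw [hQc, coeff_add]
        have hA : (X ^ (2*d + n + 2) * (Dc * Nc.reverse)).coeff (m+1) = 0 := by
          rw [mul_comm, coeff_mul_X_pow']
          have : ¬ (2*d + n + 2 ≤ m + 1) := by omega
          simp [this]
        have hB : (X ^ (m+1) * (Nc * Dc.reverse)).coeff (m+1) = (Nc * Dc.reverse).coeff 0 := by
          have := coeff_X_pow_mul (Nc * Dc.reverse) (m+1) 0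
          simpa using this
        rw [hA, hB, zero_add, mul_coeff_zero]
      rw [hQ0, coeff_zero] at h1
      rw [coeff_zero_reverse, hDcmon.leadingCoeff, mul_one] at h1
      rw [hNc, coeff_map] at h1
      exact hN0 (hinj (by simpa using h1.symm))
  -- inclusion into the image of the roots of Qc
  have hsub : {α : ℝ | spr (Pc N D d α) = 1} ⊆
      (fun z : ℂ => ((z ^ (d+1) * Dc.eval z) / ((z - 1) * Nc.eval z)).re) ''
        (Qc.roots.toFinset : Set ℂ) := by
    intro α hα
    obtain ⟨z, hzroot, hzabs⟩ := spr_attained (Pc N D d α) (Pc_monic hD hdeg d α)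
      (by rw [Pc_natDegree hD hdeg]; omega)
    rw [hα] at hzabs
    have hz0 : z ≠ 0 := by
      intro h; rw [h] at hzabs; simp at hzabs
    have haeval1 : aeval (1:ℂ) D ≠ 0 := by
      intro h
      have := hDroots 1 h
      simp at this
    have hz1 : z ≠ 1 := by
      intro h
      have := Pc_eval N D d α 1
      rw [← h, show (Pc N D d α).eval z = 0 from hzroot, h] at this
      simp at this
      exact haeval1 (by rw [this])
    have hNz : Nc.eval z ≠ 0 := by
      rw [← haevN]; exact hNcirc z hzabs
    have hEq1 : z ^ (d+1) * Dc.eval z = (α:ℂ) * ((z - 1) * Nc.eval z) := by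
      have h0 := Pc_eval N D d α z
      rw [show (Pc N D d α).eval z = 0 from hzroot] at h0
      rw [haevD, haevN] at h0
      linear_combination -h0
    -- conjugate root
    have hwroot : (Pc N D d α).eval ((starRingEnd ℂ) z) = 0 := by
      have h1 : ∀ w : ℂ, (Pc N D d α).eval w = aeval w (pda N D d α) := by
        intro w; rw [Pc, eval_map, aeval_def]
      rw [h1, Polynomial.aeval_conj, ← h1, show (Pc N D d α).eval z = 0 from hzroot]
      simp
    have hwinv : (starRingEnd ℂ) z = z⁻¹ := by
      rw [Complex.inv_eq_conj (by rw [Complex.norm_eq_abs, hzabs])]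
    rw [hwinv] at hwroot
    have hEq2 : (z⁻¹) ^ (d+1) * Dc.eval z⁻¹ = (α:ℂ) * ((z⁻¹ - 1) * Nc.eval z⁻¹) := by
      have h0 := Pc_eval N D d α z⁻¹
      rw [hwroot] at h0
      rw [haevD, haevN] at h0
      linear_combination -h0
    have hQz : Qc.IsRoot z := by
      show Qc.eval z = 0
      rw [hQc]
      simp only [eval_add, eval_mul, eval_pow, eval_X]
      rw [rev_eval Nc hz0, rev_eval Dc hz0, hnatN, hnatD]
      -- substitute
      have hd1 : (z:ℂ) ^ (d+1) ≠ 0 := pow_ne_zero _ hz0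
      have hDzv : Dc.eval z = (α:ℂ) * ((z - 1) * Nc.eval z) / z^(d+1) := by
        rw [eq_div_iff hd1]; linear_combination hEq1
      have hD'v : Dc.eval z⁻¹ = (α:ℂ) * ((z⁻¹ - 1) * Nc.eval z⁻¹) * z^(d+1) := by
        have hx : ((z:ℂ)⁻¹) ^ (d+1) ≠ 0 := pow_ne_zero _ (inv_ne_zero hz0)
        have hzz : (z⁻¹) ^ (d+1) * z ^ (d+1) = 1 := by
          rw [← mul_pow, inv_mul_cancel₀ hz0, one_pow]
        linear_combination z ^ (d+1) * hEq2 - Dc.eval z⁻¹ * hzz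
      rw [hDzv, hD'v]
      field_simp
      ring
    refine ⟨z, ?_, ?_⟩
    · simp only [Finset.coe_mem, Finset.mem_coe, Multiset.mem_toFinset, mem_roots hQne]
      exact hQz
    · show ((z ^ (d+1) * Dc.eval z) / ((z - 1) * Nc.eval z)).re = α
      have hden : (z - 1) * Nc.eval z ≠ 0 :=
        mul_ne_zero (sub_ne_zero.mpr hz1) hNz
      have : (z ^ (d+1) * Dc.eval z) / ((z - 1) * Nc.eval z) = (α:ℂ) := by
        rw [div_eq_iff hden]; linear_combination hEq1
      rw [this, Complex.ofReal_re]
  exact Set.Finite.subset (Set.Finite.image _ (Qc.roots.toFinset.finite_toSet)) hsub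


end Stmt7Aux

theorem stmt7 (N D : ℝ[X]) (hco : IsCoprime N D) (hD : D.Monic)
    (hdeg : N.degree < D.degree)
    (hDroots : ∀ z : ℂ, Polynomial.aeval z D = 0 → ‖z‖ < 1)
    (hN : N ≠ 0)
    (hNcirc : ∀ z : ℂ, ‖z‖ = 1 → Polynomial.aeval z N ≠ 0) :
    ∀ d : ℕ, ∃ α₀ αd α₁ : ℝ, α₀ < 0 ∧ α₁ < αd ∧ αd < α₀ ∧
      sprR (pda N D d αd) = 1 ∧
      (∀ α ∈ Set.Ioo αd α₀, sprR (pda N D d α) < 1) ∧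
      (∀ α ∈ Set.Ioo α₁ αd, sprR (pda N D d α) > 1) := by
  intro d
  have hcont : Continuous (fun α : ℝ => spr (Stmt7Aux.Pc N D d α)) :=
    Stmt7Aux.f_cont hD hdeg d
  set f : ℝ → ℝ := fun α => spr (Stmt7Aux.Pc N D d α) with hfdef
  have hsprR : ∀ α : ℝ, sprR (pda N D d α) = f α := fun α => rfl
  have hf0 : f 0 < 1 := Stmt7Aux.f_zero_lt_one hD hdeg hDroots d
  obtain ⟨A, hAneg, hfA⟩ := Stmt7Aux.exists_A hD hdeg hN d
  have hCfin : {α : ℝ | f α = 1}.Finite :=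
    Stmt7Aux.Cfinite hco hD hdeg hDroots hN hNcirc d
  obtain ⟨δ, hδpos, hδ⟩ : ∃ δ > 0, ∀ β : ℝ, |β - 0| < δ → f β < 1 := by
    obtain ⟨δ, hδpos, h⟩ := Metric.continuous_iff.mp hcont 0 (1 - f 0) (by linarith)
    refine ⟨δ, hδpos, fun β hβ => ?_⟩
    have := h β (by rwa [Real.dist_eq])
    rw [Real.dist_eq, abs_sub_lt_iff] at this
    linarith [this.1]
  set G : Set ℝ := {α : ℝ | α < 0 ∧ 1 < f α} with hG
  have hAG : A ∈ G := ⟨hAneg, hfA⟩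
  have hGbdd : ∀ α ∈ G, α ≤ -δ := by
    intro α hα
    by_contra hcon
    push_neg at hcon
    have h1 : |α - 0| < δ := by
      rw [sub_zero, abs_lt]
      exact ⟨by linarith, by linarith [hα.1]⟩
    have := hδ α h1
    linarith [hα.2]
  have hGbddAbove : BddAbove G := ⟨-δ, fun α hα => hGbdd α hα⟩
  have hGne : G.Nonempty := ⟨A, hAG⟩
  set αd := sSup G with hαd
  have hαdle : αd ≤ -δ := csSup_le hGne hGbdd
  have hαdneg : αd < 0 := lt_of_le_of_lt hαdle (by linarith)
  have hAαd : A ≤ αd := le_csSup hGbddAbove hAG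
  have h1le : 1 ≤ f αd := by
    have hclosed : IsClosed {x : ℝ | 1 ≤ f x} := isClosed_le continuous_const hcont
    have hsubcl : closure G ⊆ {x | 1 ≤ f x} :=
      closure_minimal (fun x hx => le_of_lt hx.2) hclosed
    exact hsubcl (csSup_mem_closure hGne hGbddAbove)
  have hle1 : f αd ≤ 1 := by
    by_contra hcon
    push_neg at hcon
    obtain ⟨δ', hδ'pos, hδ'⟩ := Metric.continuous_iff.mp hcont αd (f αd - 1) (by linarith)
    set β := αd + min δ' (-αd) / 2 with hβ
    have hmin : 0 < min δ' (-αd) := lt_min hδ'pos (by linarith)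
    have hβgt : αd < β := by rw [hβ]; linarith
    have hβ0 : β < 0 := by
      have h3 : min δ' (-αd) ≤ -αd := min_le_right _ _
      rw [hβ]; linarith
    have hdist : dist β αd < δ' := by
      rw [Real.dist_eq, hβ]
      have h2 : min δ' (-αd) ≤ δ' := min_le_left _ _
      rw [show αd + min δ' (-αd)/2 - αd = min δ' (-αd)/2 by ring,
        abs_of_pos (by linarith)]
      linarith
    have hfβ : 1 < f β := by
      have := hδ' β hdist
      rw [Real.dist_eq, abs_sub_lt_iff] at this
      linarith [this.2]
    have hβG : β ∈ G := ⟨hβ0, hfβ⟩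
    have := le_csSup hGbddAbove hβG
    linarith
  have hfαd : f αd = 1 := le_antisymm hle1 h1le
  have hAlt : A < αd := by
    rcases lt_or_eq_of_le hAαd with h | h
    · exact h
    · exfalso; rw [← h] at hfαd; linarith
  have hright : ∀ α, αd < α → α < 0 → f α ≤ 1 := by
    intro α h1 h2
    by_contra hcon
    push_neg at hcon
    have hαG : α ∈ G := ⟨h2, hcon⟩
    have := le_csSup hGbddAbove hαG
    linarith
  set S₀ : Set ℝ := {c | f c = 1 ∧ αd < c ∧ c < 0} with hS₀
  have hS₀fin : S₀.Finite := hCfin.subset (fun c hc => hc.1)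
  have hmain₀ : ∃ α₀ : ℝ, α₀ < 0 ∧ αd < α₀ ∧ ∀ α ∈ Set.Ioo αd α₀, f α < 1 := by
    by_cases hS₀ne : S₀.Nonempty
    · have hmem := Set.Nonempty.csInf_mem hS₀ne hS₀fin
      refine ⟨sInf S₀, hmem.2.2, hmem.2.1, ?_⟩
      intro α hα
      have h2 : f α ≤ 1 := hright α hα.1 (lt_trans hα.2 hmem.2.2)
      rcases lt_or_eq_of_le h2 with h | h
      · exact h
      · exfalso
        have hmem2 : α ∈ S₀ := ⟨h, hα.1, lt_trans hα.2 hmem.2.2⟩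
        have := csInf_le hS₀fin.bddBelow hmem2
        have := hα.2
        linarith
    · refine ⟨αd/2, by linarith, by linarith, ?_⟩
      intro α hα
      have hα2 : α < 0 := by
        have := hα.2; linarith
      have h2 : f α ≤ 1 := hright α hα.1 hα2
      rcases lt_or_eq_of_le h2 with h | h
      · exact h
      · exact absurd ⟨h, hα.1, hα2⟩ (fun hc => hS₀ne ⟨α, hc⟩)
  obtain ⟨α₀, hα₀neg, hαdα₀, hIoo₀⟩ := hmain₀
  -- now the left side
  set S₁ : Set ℝ := insert A ({α | f α = 1} ∩ Set.Ioo A αd) with hS₁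
  have hS₁fin : S₁.Finite := (hCfin.inter_of_left _).insert A
  have hS₁ne : S₁.Nonempty := ⟨A, Set.mem_insert _ _⟩
  have hS₁lt : ∀ x ∈ S₁, x < αd := by
    intro x hx
    rcases Set.mem_insert_iff.mp hx with rfl | hx'
    · exact hAlt
    · exact hx'.2.2
  set α₁ := sSup S₁ with hα₁
  have hα₁mem : α₁ ∈ S₁ := Set.Nonempty.csSup_mem hS₁ne hS₁fin
  have hα₁lt : α₁ < αd := hS₁lt _ hα₁mem
  have hAα₁ : A ≤ α₁ := le_csSup hS₁fin.bddAbove (Set.mem_insert _ _)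
  have hno1 : ∀ x ∈ Set.Ioo α₁ αd, f x ≠ 1 := by
    intro x hx h1
    have hmem : x ∈ S₁ :=
      Set.mem_insert_of_mem _ ⟨h1, lt_of_le_of_lt hAα₁ hx.1, hx.2⟩
    have := le_csSup hS₁fin.bddAbove hmem
    have := hx.1
    linarith
  obtain ⟨g, hgG, hgα₁⟩ : ∃ g ∈ G, α₁ < g := exists_lt_of_lt_csSup hGne hα₁lt
  have hgαd : g < αd := by
    have hle := le_csSup hGbddAbove hgG
    rcases lt_or_eq_of_le hle with h | h
    · exact h
    · exfalso; rw [h] at hgG; linarith [hgG.2]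
  have hleft : ∀ x ∈ Set.Ioo α₁ αd, 1 < f x := by
    intro x hx
    by_contra hcon
    push_neg at hcon
    have hx1 : f x < 1 := lt_of_le_of_ne hcon (hno1 x hx)
    have hivt := intermediate_value_uIcc (a := x) (b := g) (f := f) hcont.continuousOn
    have h1mem : (1:ℝ) ∈ Set.uIcc (f x) (f g) := by
      rw [Set.mem_uIcc]
      left
      exact ⟨le_of_lt hx1, le_of_lt hgG.2⟩
    obtain ⟨c, hc, hfc⟩ := hivt h1mem
    have hcIoo : c ∈ Set.Ioo α₁ αd := by
      have hOC : Set.OrdConnected (Set.Ioo α₁ αd) := Set.ordConnected_Ioo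
      exact hOC.uIcc_subset hx ⟨hgα₁, hgαd⟩ hc
    exact hno1 c hcIoo hfc
  refine ⟨α₀, αd, α₁, hα₀neg, hα₁lt, hαdα₀, ?_, ?_, ?_⟩
  · rw [hsprR]; exact hfαd
  · intro α hα; rw [hsprR]; exact hIoo₀ α hα
  · intro α hα; rw [hsprR]; exact hleft α hα
end

section
/- Suppose d ∈ ℕ, α ∈ ℝ, and θ ∈ (0, π] satisfy p_{d,α}(e^{iθ}) = 0, and write D(e^{iθ})/N(e^{iθ}) = a + b·i with a, b ∈ ℝ (this quotient is well defined since N has no roots on the unit circle). Then b·(cos(dθ) − cos((d+1)θ)) + a·(sin(dθ) − sin((d+1)θ)) = 0, and α·(cos(dθ) − cos((d+1)θ)) = a. -/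
open Polynomial

theorem stmt15 (N D : ℝ[X]) (hco : IsCoprime N D) (hD : D.Monic)
    (hdeg : N.degree < D.degree)
    (hDroots : ∀ z : ℂ, Polynomial.aeval z D = 0 → ‖z‖ < 1)
    (hN : N ≠ 0)
    (hNcirc : ∀ z : ℂ, ‖z‖ = 1 → Polynomial.aeval z N ≠ 0)
    (d : ℕ) (α : ℝ) (θ : ℝ) (hθ : θ ∈ Set.Ioc 0 Real.pi)
    (hroot : Polynomial.aeval (Complex.exp (θ * Complex.I)) (pda N D d α) = 0)
    (a b : ℝ)
    (hab : Polynomial.aeval (Complex.exp (θ * Complex.I)) D /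
        Polynomial.aeval (Complex.exp (θ * Complex.I)) N = (a : ℂ) + (b : ℂ) * Complex.I) :
    b * (Real.cos (d * θ) - Real.cos ((d + 1) * θ)) +
        a * (Real.sin (d * θ) - Real.sin ((d + 1) * θ)) = 0 ∧
    α * (Real.cos (d * θ) - Real.cos ((d + 1) * θ)) = a := by
  set z : ℂ := Complex.exp (θ * Complex.I) with hzdef
  have habs : ‖z‖ = 1 := by
    rw [hzdef, Complex.norm_exp]
    simp
  have hNz : Polynomial.aeval z N ≠ 0 := hNcirc z habs
  have hE : z ^ (d + 1) * Polynomial.aeval z D -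
      (α : ℂ) * ((z - 1) * Polynomial.aeval z N) = 0 := by
    simpa [pda] using hroot
  rw [div_eq_iff hNz] at hab
  rw [hab] at hE
  have h2 : (((a : ℂ) + b * Complex.I) * z ^ (d + 1) - (α : ℂ) * (z - 1)) *
      Polynomial.aeval z N = 0 := by linear_combination hE
  have hkey : ((a : ℂ) + b * Complex.I) * z ^ (d + 1) = (α : ℂ) * (z - 1) := by
    rcases mul_eq_zero.mp h2 with h | h
    · exact sub_eq_zero.mp h
    · exact absurd h hNz
  have hzpow : z ^ (d + 1) =
      (Real.cos (((d : ℝ) + 1) * θ) : ℂ) + (Real.sin (((d : ℝ) + 1) * θ) : ℂ) * Complex.I := by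
    rw [hzdef, ← Complex.exp_nat_mul]
    have : ((d + 1 : ℕ) : ℂ) * (↑θ * Complex.I) = ((((d : ℝ) + 1) * θ : ℝ) : ℂ) * Complex.I := by
      push_cast; ring
    rw [this, Complex.exp_mul_I]
    push_cast
    ring
  have hz1 : z = (Real.cos θ : ℂ) + (Real.sin θ : ℂ) * Complex.I := by
    rw [hzdef, Complex.exp_mul_I]
    simp
  rw [hzpow, hz1] at hkey
  have h1 : a * Real.cos (((d : ℝ) + 1) * θ) - b * Real.sin (((d : ℝ) + 1) * θ)
      = α * (Real.cos θ - 1) := by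
    have := congrArg Complex.re hkey
    simpa [-Complex.ofReal_cos, -Complex.ofReal_sin] using this
  have h2' : a * Real.sin (((d : ℝ) + 1) * θ) + b * Real.cos (((d : ℝ) + 1) * θ)
      = α * Real.sin θ := by
    have := congrArg Complex.im hkey
    simpa [-Complex.ofReal_cos, -Complex.ofReal_sin] using this
  have hdθ : (d : ℝ) * θ = ((d : ℝ) + 1) * θ - θ := by ring
  have pyth := Real.sin_sq_add_cos_sq (((d : ℝ) + 1) * θ)
  constructor
  · rw [hdθ, Real.cos_sub, Real.sin_sub]
    linear_combination (Real.cos θ - 1) * h2' - Real.sin θ * h1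
  · rw [hdθ, Real.cos_sub]
    linear_combination a * pyth - Real.cos (((d : ℝ) + 1) * θ) * h1 -
      Real.sin (((d : ℝ) + 1) * θ) * h2'
end
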